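/- arXiv:2101.08007 — 14 statements merged into one kernel-verified Lean document; each statement's English description precedes it below -/
import Mathlib

section
/- Suppose π = 1/2, x′ = 1−x, z′ = 1−z, x ≥ 1/2 and z ≥ 1/2. If y₁ − y₂ ≥ y₄ − y₃ ≥ 0, then RD_crude ≥ RD_obs ≥ RD_true; and if y₁ − y₂ ≤ y₄ − y₃ ≤ 0, then RD_crude ≤ RD_obs ≤ RD_true. (Peña 2020, Theorems 3–4, as re-stated in the paper's Theorem 1.) -/
set_option maxHeartbeats 1000000 in
theorem pena2020_thm3_4 (pc x x' z z' : ℝ) (y₁ y₂ y₃ y₄ : ℝ)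
    (hpc : 0 < pc) (hpc1 : pc < 1)
    (hx0 : 0 < x) (hx1 : x < 1) (hx'0 : 0 < x') (hx'1 : x' < 1)
    (hz0 : 0 < z) (hz1 : z < 1) (hz'0 : 0 < z') (hz'1 : z' < 1)
    (hpch : pc = 1/2) (hx' : x' = 1 - x) (hz' : z' = 1 - z)
    (hxge : x ≥ 1/2) (hzge : z ≥ 1/2)
    (Pca Pcab Pd Pcad Pcadb Pcbd Pcbdb EYad EYadb EYbd EYbdb RDtrue RDcrude RDobs : ℝ)
    (hPca : Pca = x*pc/(x*pc + x'*(1-pc)))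
    (hPcab : Pcab = (1-x)*pc/((1-x)*pc + (1-x')*(1-pc)))
    (hPd : Pd = z*pc + z'*(1-pc))
    (hPcad : Pcad = x*z*pc/(x*z*pc + x'*z'*(1-pc)))
    (hPcadb : Pcadb = x*(1-z)*pc/(x*(1-z)*pc + x'*(1-z')*(1-pc)))
    (hPcbd : Pcbd = (1-x)*z*pc/((1-x)*z*pc + (1-x')*z'*(1-pc)))
    (hPcbdb : Pcbdb = (1-x)*(1-z)*pc/((1-x)*(1-z)*pc + (1-x')*(1-z')*(1-pc)))
    (hEYad : EYad = y₁*Pcad + y₂*(1-Pcad))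
    (hEYadb : EYadb = y₁*Pcadb + y₂*(1-Pcadb))
    (hEYbd : EYbd = y₃*Pcbd + y₄*(1-Pcbd))
    (hEYbdb : EYbdb = y₃*Pcbdb + y₄*(1-Pcbdb))
    (hRDtrue : RDtrue = (y₁-y₃)*pc + (y₂-y₄)*(1-pc))
    (hRDcrude : RDcrude = (y₁*Pca + y₂*(1-Pca)) - (y₃*Pcab + y₄*(1-Pcab)))
    (hRDobs : RDobs = (EYad - EYbd)*Pd + (EYadb - EYbdb)*(1-Pd))
    :
    (y₁ - y₂ ≥ y₄ - y₃ ∧ y₄ - y₃ ≥ 0 → RDcrude ≥ RDobs ∧ RDobs ≥ RDtrue) ∧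
    (y₁ - y₂ ≤ y₄ - y₃ ∧ y₄ - y₃ ≤ 0 → RDcrude ≤ RDobs ∧ RDobs ≤ RDtrue) := by
  subst hpch hx' hz'
  have hD1 : (0:ℝ) < x*z + (1-x)*(1-z) := by nlinarith
  have hD2 : (0:ℝ) < x*(1-z) + (1-x)*z := by nlinarith
  -- simplified probabilities
  have hPca2 : Pca = x := by
    rw [hPca]
    have h : x*(1/2:ℝ) + (1-x)*(1-1/2) = 1/2 := by ring
    rw [h]; field_simp
  have hPcab2 : Pcab = 1 - x := by
    rw [hPcab]
    have h : (1-x)*(1/2:ℝ) + (1-(1-x))*(1-1/2) = 1/2 := by ring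
    rw [h]; field_simp
  have hPd2 : Pd = 1/2 := by rw [hPd]; ring
  have hPcad2 : Pcad = x*z/(x*z + (1-x)*(1-z)) := by
    rw [hPcad]
    rw [div_eq_div_iff (ne_of_gt (by nlinarith)) hD1.ne']
    ring
  have hPcadb2 : Pcadb = x*(1-z)/(x*(1-z) + (1-x)*z) := by
    rw [hPcadb]
    rw [div_eq_div_iff (ne_of_gt (by nlinarith)) hD2.ne']
    ring
  have hPcbd2 : Pcbd = 1 - x*(1-z)/(x*(1-z) + (1-x)*z) := by
    rw [hPcbd, eq_sub_iff_add_eq, div_add_div _ _ (ne_of_gt (by nlinarith)) hD2.ne',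
      div_eq_one_iff_eq (ne_of_gt (mul_pos (by nlinarith) hD2))]
    ring
  have hPcbdb2 : Pcbdb = 1 - x*z/(x*z + (1-x)*(1-z)) := by
    rw [hPcbdb, eq_sub_iff_add_eq, div_add_div _ _ (ne_of_gt (by nlinarith)) hD1.ne',
      div_eq_one_iff_eq (ne_of_gt (mul_pos (by nlinarith) hD1))]
    ring
  set u := x*z/(x*z + (1-x)*(1-z)) with hu
  set v := x*(1-z)/(x*(1-z) + (1-x)*z) with hv
  -- key inequalities: 1 ≤ u + v ≤ 2x
  have h1 : 1 ≤ u + v := by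
    rw [hu, hv, div_add_div _ _ hD1.ne' hD2.ne', le_div_iff₀ (mul_pos hD1 hD2)]
    nlinarith [mul_nonneg (mul_nonneg hz0.le (by linarith : (0:ℝ) ≤ 1 - z))
      (by linarith : (0:ℝ) ≤ 2*x - 1)]
  have h2 : u + v ≤ 2*x := by
    rw [hu, hv, div_add_div _ _ hD1.ne' hD2.ne', div_le_iff₀ (mul_pos hD1 hD2)]
    nlinarith [mul_nonneg (mul_nonneg (mul_nonneg (mul_nonneg hx0.le
      (by linarith : (0:ℝ) ≤ 1 - x)) (by linarith : (0:ℝ) ≤ 2*x - 1))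
      (by linarith : (0:ℝ) ≤ 2*z - 1)) (by linarith : (0:ℝ) ≤ 2*z - 1)]
  -- express differences
  have hcrude : RDcrude - RDobs = ((y₁ - y₂) - (y₄ - y₃)) * (x - (u + v)/2) := by
    rw [hRDcrude, hRDobs, hEYad, hEYadb, hEYbd, hEYbdb, hPca2, hPcab2, hPd2,
      hPcad2, hPcadb2, hPcbd2, hPcbdb2]
    ring
  have hobs : RDobs - RDtrue = ((y₁ - y₂) - (y₄ - y₃)) * ((u + v - 1)/2) := by
    rw [hRDtrue, hRDobs, hEYad, hEYadb, hEYbd, hEYbdb, hPd2,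
      hPcad2, hPcadb2, hPcbd2, hPcbdb2]
    ring
  have hQ1 : (0:ℝ) ≤ x - (u + v)/2 := by linarith
  have hQ2 : (0:ℝ) ≤ (u + v - 1)/2 := by linarith
  constructor
  · rintro ⟨hab, hb⟩
    have hP : (0:ℝ) ≤ (y₁ - y₂) - (y₄ - y₃) := by linarith
    constructor
    · linarith [hcrude, mul_nonneg hP hQ1]
    · linarith [hobs, mul_nonneg hP hQ2]
  · rintro ⟨hab, hb⟩
    have hP : (y₁ - y₂) - (y₄ - y₃) ≤ (0:ℝ) := by linarith
    constructor
    · linarith [hcrude, mul_nonpos_iff.mpr (Or.inr ⟨hP, hQ1⟩)]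
    · linarith [hobs, mul_nonpos_iff.mpr (Or.inr ⟨hP, hQ2⟩)]
end

section
/- Suppose π = 1/2, x′ = 1−x, z′ = 1−z, x ≥ 1/2 and z ≥ 1/2. Then RD_obs lies between RD_true and RD_crude, i.e. min(RD_true, RD_crude) ≤ RD_obs ≤ max(RD_true, RD_crude). (Paper's Theorem 2.) -/
set_option maxHeartbeats 1000000

theorem thm2_between (pc x x' z z' : ℝ) (y₁ y₂ y₃ y₄ : ℝ)
    (hpc : 0 < pc) (hpc1 : pc < 1)
    (hx0 : 0 < x) (hx1 : x < 1) (hx'0 : 0 < x') (hx'1 : x' < 1)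
    (hz0 : 0 < z) (hz1 : z < 1) (hz'0 : 0 < z') (hz'1 : z' < 1)
    (hpch : pc = 1/2) (hx' : x' = 1 - x) (hz' : z' = 1 - z)
    (hxge : x ≥ 1/2) (hzge : z ≥ 1/2)
    (Pca Pcab Pd Pcad Pcadb Pcbd Pcbdb EYad EYadb EYbd EYbdb RDtrue RDcrude RDobs : ℝ)
    (hPca : Pca = x*pc/(x*pc + x'*(1-pc)))
    (hPcab : Pcab = (1-x)*pc/((1-x)*pc + (1-x')*(1-pc)))
    (hPd : Pd = z*pc + z'*(1-pc))
    (hPcad : Pcad = x*z*pc/(x*z*pc + x'*z'*(1-pc)))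
    (hPcadb : Pcadb = x*(1-z)*pc/(x*(1-z)*pc + x'*(1-z')*(1-pc)))
    (hPcbd : Pcbd = (1-x)*z*pc/((1-x)*z*pc + (1-x')*z'*(1-pc)))
    (hPcbdb : Pcbdb = (1-x)*(1-z)*pc/((1-x)*(1-z)*pc + (1-x')*(1-z')*(1-pc)))
    (hEYad : EYad = y₁*Pcad + y₂*(1-Pcad))
    (hEYadb : EYadb = y₁*Pcadb + y₂*(1-Pcadb))
    (hEYbd : EYbd = y₃*Pcbd + y₄*(1-Pcbd))
    (hEYbdb : EYbdb = y₃*Pcbdb + y₄*(1-Pcbdb))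
    (hRDtrue : RDtrue = (y₁-y₃)*pc + (y₂-y₄)*(1-pc))
    (hRDcrude : RDcrude = (y₁*Pca + y₂*(1-Pca)) - (y₃*Pcab + y₄*(1-Pcab)))
    (hRDobs : RDobs = (EYad - EYbd)*Pd + (EYadb - EYbdb)*(1-Pd))
    :
    min RDtrue RDcrude ≤ RDobs ∧ RDobs ≤ max RDtrue RDcrude := by
  subst hpch hx' hz'
  have hA : (0:ℝ) < x*z + (1-x)*(1-z) := by nlinarith
  have hB : (0:ℝ) < x*(1-z) + (1-x)*z := by nlinarith
  have hA' : x*z + (1-x)*(1-z) ≠ 0 := ne_of_gt hA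
  have hB' : x*(1-z) + (1-x)*z ≠ 0 := ne_of_gt hB
  have hPca1 : Pca = x := by rw [hPca]; field_simp; ring
  have hPcab1 : Pcab = 1 - x := by rw [hPcab]; field_simp; ring
  have hPd1 : Pd = 1/2 := by rw [hPd]; ring
  have hPcad1 : Pcad = x*z/(x*z + (1-x)*(1-z)) := by
    rw [hPcad]; rw [div_eq_div_iff (by nlinarith) hA'] <;> ring
  have hPcadb1 : Pcadb = x*(1-z)/(x*(1-z) + (1-x)*z) := by
    rw [hPcadb]; rw [div_eq_div_iff (by nlinarith) hB'] <;> ring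
  have hPcbd1 : Pcbd = (1-x)*z/(x*(1-z) + (1-x)*z) := by
    rw [hPcbd]; rw [div_eq_div_iff (by nlinarith) hB'] <;> ring
  have hPcbdb1 : Pcbdb = (1-x)*(1-z)/(x*z + (1-x)*(1-z)) := by
    rw [hPcbdb]; rw [div_eq_div_iff (by nlinarith) hA'] <;> ring
  set K := y₁ - y₂ + y₃ - y₄ with hK
  set D := 2*((x*z + (1-x)*(1-z))*(x*(1-z) + (1-x)*z)) with hD
  have hDpos : 0 < D := by positivity
  have e1 : RDobs - RDtrue = K * (z*(1-z)*(2*x-1)/D) := by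
    rw [hRDobs, hRDtrue, hEYad, hEYadb, hEYbd, hEYbdb, hPcad1, hPcadb1, hPcbd1,
      hPcbdb1, hPd1, hD, hK]
    field_simp
    ring
  have e2 : RDcrude - RDobs = K * (x*(1-x)*(2*x-1)*(2*z-1)^2/D) := by
    rw [hRDobs, hRDcrude, hEYad, hEYadb, hEYbd, hEYbdb, hPcad1, hPcadb1, hPcbd1,
      hPcbdb1, hPd1, hPca1, hPcab1, hD, hK]
    field_simp
    ring
  have hu : 0 ≤ z*(1-z)*(2*x-1)/D := by
    apply div_nonneg _ (le_of_lt hDpos)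
    exact mul_nonneg (mul_nonneg hz0.le (by linarith)) (by linarith)
  have hv : 0 ≤ x*(1-x)*(2*x-1)*(2*z-1)^2/D := by
    apply div_nonneg _ (le_of_lt hDpos)
    exact mul_nonneg (mul_nonneg (mul_nonneg hx0.le (by linarith)) (by linarith)) (sq_nonneg _)
  rcases le_or_gt 0 K with h | h
  · have h1 : RDtrue ≤ RDobs := by linarith [mul_nonneg h hu, e1]
    have h2 : RDobs ≤ RDcrude := by linarith [mul_nonneg h hv, e2]
    exact ⟨le_trans (min_le_left _ _) h1, le_trans h2 (le_max_right _ _)⟩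
  · have h1 : RDobs ≤ RDtrue := by linarith [mul_nonpos_of_nonpos_of_nonneg h.le hu, e1]
    have h2 : RDcrude ≤ RDobs := by linarith [mul_nonpos_of_nonpos_of_nonneg h.le hv, e2]
    exact ⟨le_trans (min_le_right _ _) h2, le_trans h1 (le_max_left _ _)⟩
end

section
/- Suppose π = 1/2, x′ = 1−x, z′ = 1−z, x ≤ 1/2 and z ≤ 1/2. Then RD_obs lies between RD_true and RD_crude, i.e. min(RD_true, RD_crude) ≤ RD_obs ≤ max(RD_true, RD_crude). (Paper's Theorem 3.) -/
set_option maxHeartbeats 1000000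

lemma aux_key2 (x z : ℝ) (hx0 : 0 < x) (hx1 : x < 1) (hz0 : 0 < z) (hz1 : z < 1)
    (hxle : x ≤ 1/2) :
    x*z/(x*z+(1-x)*(1-z)) + x*(1-z)/(x*(1-z)+(1-x)*z) ≤ 1 := by
  have hD1 : 0 < x*z+(1-x)*(1-z) := by nlinarith
  have hD2 : 0 < x*(1-z)+(1-x)*z := by nlinarith
  rw [div_add_div _ _ hD1.ne' hD2.ne', div_le_one (mul_pos hD1 hD2)]
  nlinarith [mul_nonneg (mul_pos hz0 (by linarith : (0:ℝ) < 1 - z)).le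
    (by linarith : (0:ℝ) ≤ 1 - 2*x)]

lemma aux_key1 (x z : ℝ) (hx0 : 0 < x) (hx1 : x < 1) (hz0 : 0 < z) (hz1 : z < 1)
    (hxle : x ≤ 1/2) :
    x*2 ≤ x*z/(x*z+(1-x)*(1-z)) + x*(1-z)/(x*(1-z)+(1-x)*z) := by
  have hD1 : 0 < x*z+(1-x)*(1-z) := by nlinarith
  have hD2 : 0 < x*(1-z)+(1-x)*z := by nlinarith
  rw [div_add_div _ _ hD1.ne' hD2.ne', le_div_iff₀ (mul_pos hD1 hD2)]
  nlinarith [mul_nonneg (mul_nonneg (mul_nonneg hx0.le (by linarith : (0:ℝ) ≤ 1 - x))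
    (by linarith : (0:ℝ) ≤ 1 - 2*x)) (sq_nonneg (1 - 2*z))]


theorem thm3_between (pc x x' z z' : ℝ) (y₁ y₂ y₃ y₄ : ℝ)
    (hpc : 0 < pc) (hpc1 : pc < 1)
    (hx0 : 0 < x) (hx1 : x < 1) (hx'0 : 0 < x') (hx'1 : x' < 1)
    (hz0 : 0 < z) (hz1 : z < 1) (hz'0 : 0 < z') (hz'1 : z' < 1)
    (hpch : pc = 1/2) (hx' : x' = 1 - x) (hz' : z' = 1 - z)
    (hxle : x ≤ 1/2) (hzle : z ≤ 1/2)
    (Pca Pcab Pd Pcad Pcadb Pcbd Pcbdb EYad EYadb EYbd EYbdb RDtrue RDcrude RDobs : ℝ)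
    (hPca : Pca = x*pc/(x*pc + x'*(1-pc)))
    (hPcab : Pcab = (1-x)*pc/((1-x)*pc + (1-x')*(1-pc)))
    (hPd : Pd = z*pc + z'*(1-pc))
    (hPcad : Pcad = x*z*pc/(x*z*pc + x'*z'*(1-pc)))
    (hPcadb : Pcadb = x*(1-z)*pc/(x*(1-z)*pc + x'*(1-z')*(1-pc)))
    (hPcbd : Pcbd = (1-x)*z*pc/((1-x)*z*pc + (1-x')*z'*(1-pc)))
    (hPcbdb : Pcbdb = (1-x)*(1-z)*pc/((1-x)*(1-z)*pc + (1-x')*(1-z')*(1-pc)))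
    (hEYad : EYad = y₁*Pcad + y₂*(1-Pcad))
    (hEYadb : EYadb = y₁*Pcadb + y₂*(1-Pcadb))
    (hEYbd : EYbd = y₃*Pcbd + y₄*(1-Pcbd))
    (hEYbdb : EYbdb = y₃*Pcbdb + y₄*(1-Pcbdb))
    (hRDtrue : RDtrue = (y₁-y₃)*pc + (y₂-y₄)*(1-pc))
    (hRDcrude : RDcrude = (y₁*Pca + y₂*(1-Pca)) - (y₃*Pcab + y₄*(1-Pcab)))
    (hRDobs : RDobs = (EYad - EYbd)*Pd + (EYadb - EYbdb)*(1-Pd))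
    :
    min RDtrue RDcrude ≤ RDobs ∧ RDobs ≤ max RDtrue RDcrude := by
  subst hpch hx' hz'
  set D1 : ℝ := x*z + (1-x)*(1-z) with hD1def
  set D2 : ℝ := x*(1-z) + (1-x)*z with hD2def
  have hD1 : 0 < D1 := by nlinarith
  have hD2 : 0 < D2 := by nlinarith
  set t : ℝ := (x*z/D1 + x*(1-z)/D2)/2 with htdef
  -- simplified conditional probabilities
  have hPcad' : Pcad = x*z/D1 := by
    rw [hPcad]; rw [div_eq_div_iff (by nlinarith [mul_pos hx0 hz0, mul_pos (sub_pos.2 hx1) (sub_pos.2 hz1), mul_pos hx0 (sub_pos.2 hz1), mul_pos (sub_pos.2 hx1) hz0]) hD1.ne']; ring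
  have hPcadb' : Pcadb = x*(1-z)/D2 := by
    rw [hPcadb]; rw [div_eq_div_iff (by nlinarith [mul_pos hx0 hz0, mul_pos (sub_pos.2 hx1) (sub_pos.2 hz1), mul_pos hx0 (sub_pos.2 hz1), mul_pos (sub_pos.2 hx1) hz0]) hD2.ne']; ring
  have hPcbd' : Pcbd = 1 - x*(1-z)/D2 := by
    rw [hPcbd, eq_sub_iff_add_eq, div_add_div _ _ (by nlinarith [mul_pos hx0 hz0, mul_pos (sub_pos.2 hx1) (sub_pos.2 hz1), mul_pos hx0 (sub_pos.2 hz1), mul_pos (sub_pos.2 hx1) hz0]) hD2.ne',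
      div_eq_one_iff_eq (mul_ne_zero (by nlinarith [mul_pos hx0 hz0, mul_pos (sub_pos.2 hx1) (sub_pos.2 hz1), mul_pos hx0 (sub_pos.2 hz1), mul_pos (sub_pos.2 hx1) hz0]) hD2.ne'), hD2def]
    ring
  have hPcbdb' : Pcbdb = 1 - x*z/D1 := by
    rw [hPcbdb, eq_sub_iff_add_eq, div_add_div _ _ (by nlinarith [mul_pos hx0 hz0, mul_pos (sub_pos.2 hx1) (sub_pos.2 hz1), mul_pos hx0 (sub_pos.2 hz1), mul_pos (sub_pos.2 hx1) hz0]) hD1.ne',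
      div_eq_one_iff_eq (mul_ne_zero (by nlinarith [mul_pos hx0 hz0, mul_pos (sub_pos.2 hx1) (sub_pos.2 hz1), mul_pos hx0 (sub_pos.2 hz1), mul_pos (sub_pos.2 hx1) hz0]) hD1.ne'), hD1def]
    ring
  have hPd' : Pd = 1/2 := by rw [hPd]; ring
  have hPca' : Pca = x := by
    rw [hPca]; rw [div_eq_iff (ne_of_gt (by linarith : (0:ℝ) < x*(1/2) + (1-x)*(1-1/2)))]; ring
  have hPcab' : Pcab = 1 - x := by
    rw [hPcab]; rw [div_eq_iff (ne_of_gt (by linarith : (0:ℝ) < (1-x)*(1/2) + (1-(1-x))*(1-1/2)))]; ring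
  -- affine representations
  have hobs : RDobs = (y₁-y₄)*t + (y₂-y₃)*(1-t) := by
    rw [hRDobs, hEYad, hEYadb, hEYbd, hEYbdb, hPcad', hPcadb', hPcbd', hPcbdb',
      hPd', htdef]; ring
  have htrue : RDtrue = (y₁-y₄)*(1/2) + (y₂-y₃)*(1/2) := by rw [hRDtrue]; ring
  have hcrude : RDcrude = (y₁-y₄)*x + (y₂-y₃)*(1-x) := by
    rw [hRDcrude, hPca', hPcab']; ring
  -- t lies between x and 1/2
  have key2 : x*z/D1 + x*(1-z)/D2 ≤ 1 := by
    rw [hD1def, hD2def]; exact aux_key2 x z hx0 hx1 hz0 hz1 hxle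
  have key1 : x*2 ≤ x*z/D1 + x*(1-z)/D2 := by
    rw [hD1def, hD2def]; exact aux_key1 x z hx0 hx1 hz0 hz1 hxle
  have ht2 : t ≤ 1/2 := by rw [htdef]; linarith
  have ht1 : x ≤ t := by rw [htdef]; linarith
  clear_value t D1 D2
  clear htdef hD1def hD2def hD1 hD2 key1 key2 hPcad hPcadb hPcbd hPcbdb hPca hPcab hPd
  clear hPcad' hPcadb' hPcbd' hPcbdb' hPca' hPcab' hPd' hEYad hEYadb hEYbd hEYbdb
  clear hRDtrue hRDcrude hRDobs
  clear Pca Pcab Pd Pcad Pcadb Pcbd Pcbdb EYad EYadb EYbd EYbdb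
  rcases le_total (y₁-y₄) (y₂-y₃) with hAB | hAB
  · constructor
    · calc min RDtrue RDcrude ≤ RDtrue := min_le_left _ _
        _ ≤ RDobs := by rw [htrue, hobs]; nlinarith
    · calc RDobs ≤ RDcrude := by rw [hcrude, hobs]; nlinarith
        _ ≤ max RDtrue RDcrude := le_max_right _ _
  · constructor
    · calc min RDtrue RDcrude ≤ RDcrude := min_le_right _ _
        _ ≤ RDobs := by rw [hcrude, hobs]; nlinarith
    · calc RDobs ≤ RDtrue := by rw [htrue, hobs]; nlinarith
        _ ≤ max RDtrue RDcrude := le_max_left _ _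
end

section
/- Suppose π = 1/2, x′ = 1−x, z′ = 1−z, x ≥ 1/2 and z ≥ 1/2. If y₁ − y₂ ≥ y₄ − y₃ ≥ 0, then RD_crude ≥ RD_obs ≥ RD_true; and if y₁ − y₂ ≤ y₄ − y₃ ≤ 0, then RD_crude ≤ RD_obs ≤ RD_true. (Paper's Corollary 1.) -/
set_option maxHeartbeats 1000000 in
theorem cor1 (pc x x' z z' : ℝ) (y₁ y₂ y₃ y₄ : ℝ)
    (hpc : 0 < pc) (hpc1 : pc < 1)
    (hx0 : 0 < x) (hx1 : x < 1) (hx'0 : 0 < x') (hx'1 : x' < 1)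
    (hz0 : 0 < z) (hz1 : z < 1) (hz'0 : 0 < z') (hz'1 : z' < 1)
    (hpch : pc = 1/2) (hx' : x' = 1 - x) (hz' : z' = 1 - z)
    (hxge : x ≥ 1/2) (hzge : z ≥ 1/2)
    (Pca Pcab Pd Pcad Pcadb Pcbd Pcbdb EYad EYadb EYbd EYbdb RDtrue RDcrude RDobs : ℝ)
    (hPca : Pca = x*pc/(x*pc + x'*(1-pc)))
    (hPcab : Pcab = (1-x)*pc/((1-x)*pc + (1-x')*(1-pc)))
    (hPd : Pd = z*pc + z'*(1-pc))
    (hPcad : Pcad = x*z*pc/(x*z*pc + x'*z'*(1-pc)))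
    (hPcadb : Pcadb = x*(1-z)*pc/(x*(1-z)*pc + x'*(1-z')*(1-pc)))
    (hPcbd : Pcbd = (1-x)*z*pc/((1-x)*z*pc + (1-x')*z'*(1-pc)))
    (hPcbdb : Pcbdb = (1-x)*(1-z)*pc/((1-x)*(1-z)*pc + (1-x')*(1-z')*(1-pc)))
    (hEYad : EYad = y₁*Pcad + y₂*(1-Pcad))
    (hEYadb : EYadb = y₁*Pcadb + y₂*(1-Pcadb))
    (hEYbd : EYbd = y₃*Pcbd + y₄*(1-Pcbd))
    (hEYbdb : EYbdb = y₃*Pcbdb + y₄*(1-Pcbdb))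
    (hRDtrue : RDtrue = (y₁-y₃)*pc + (y₂-y₄)*(1-pc))
    (hRDcrude : RDcrude = (y₁*Pca + y₂*(1-Pca)) - (y₃*Pcab + y₄*(1-Pcab)))
    (hRDobs : RDobs = (EYad - EYbd)*Pd + (EYadb - EYbdb)*(1-Pd))
    :
    (y₁ - y₂ ≥ y₄ - y₃ ∧ y₄ - y₃ ≥ 0 → RDcrude ≥ RDobs ∧ RDobs ≥ RDtrue) ∧
    (y₁ - y₂ ≤ y₄ - y₃ ∧ y₄ - y₃ ≤ 0 → RDcrude ≤ RDobs ∧ RDobs ≤ RDtrue) := by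
  subst hpch hx' hz' hPca hPcab hPd hPcad hPcadb hPcbd hPcbdb hEYad hEYadb hEYbd hEYbdb
    hRDtrue hRDcrude hRDobs
  obtain ⟨D1, hD1⟩ : ∃ D1 : ℝ, D1 = x*z + (1-x)*(1-z) := ⟨_, rfl⟩
  obtain ⟨D2, hD2⟩ : ∃ D2 : ℝ, D2 = x*(1-z) + (1-x)*z := ⟨_, rfl⟩
  have hD1pos : 0 < D1 := by rw [hD1]; nlinarith
  have hD2pos : 0 < D2 := by rw [hD2]; nlinarith
  obtain ⟨p, hp⟩ : ∃ p : ℝ, p = x*z/D1 := ⟨_, rfl⟩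
  obtain ⟨q, hq⟩ : ∃ q : ℝ, q = x*(1-z)/D2 := ⟨_, rfl⟩
  have d1pos : (0:ℝ) < x*z*(1/2) + (1-x)*(1-z)*(1-1/2) := by nlinarith
  have d2pos : (0:ℝ) < x*(1-z)*(1/2) + (1-x)*(1-(1-z))*(1-1/2) := by nlinarith
  have d3pos : (0:ℝ) < (1-x)*z*(1/2) + (1-(1-x))*(1-z)*(1-1/2) := by nlinarith
  have d4pos : (0:ℝ) < (1-x)*(1-z)*(1/2) + (1-(1-x))*(1-(1-z))*(1-1/2) := by nlinarith
  have d5pos : (0:ℝ) < x*(1/2) + (1-x)*(1-1/2) := by nlinarith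
  have d6pos : (0:ℝ) < (1-x)*(1/2) + (1-(1-x))*(1-1/2) := by nlinarith
  have e1 : x*z*(1/2)/(x*z*(1/2) + (1-x)*(1-z)*(1-1/2)) = p := by
    rw [hp, div_eq_div_iff d1pos.ne' hD1pos.ne', hD1]; ring
  have e2 : x*(1-z)*(1/2)/(x*(1-z)*(1/2) + (1-x)*(1-(1-z))*(1-1/2)) = q := by
    rw [hq, div_eq_div_iff d2pos.ne' hD2pos.ne', hD2]; ring
  have e3 : (1-x)*z*(1/2)/((1-x)*z*(1/2) + (1-(1-x))*(1-z)*(1-1/2)) = 1 - q := by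
    rw [eq_sub_iff_add_eq, hq, div_add_div _ _ d3pos.ne' hD2pos.ne',
      div_eq_one_iff_eq (mul_pos d3pos hD2pos).ne', hD2]
    ring
  have e4 : (1-x)*(1-z)*(1/2)/((1-x)*(1-z)*(1/2) + (1-(1-x))*(1-(1-z))*(1-1/2)) = 1 - p := by
    rw [eq_sub_iff_add_eq, hp, div_add_div _ _ d4pos.ne' hD1pos.ne',
      div_eq_one_iff_eq (mul_pos d4pos hD1pos).ne', hD1]
    ring
  have e5 : x*(1/2)/(x*(1/2) + (1-x)*(1-1/2)) = x := by
    rw [div_eq_iff d5pos.ne']; ring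
  have e6 : (1-x)*(1/2)/((1-x)*(1/2) + (1-(1-x))*(1-1/2)) = 1 - x := by
    rw [div_eq_iff d6pos.ne']; ring
  rw [e1, e2, e3, e4, e5, e6]
  have key1 : x*z*D2 + x*(1-z)*D1 - D1*D2 = z*(1-z)*(2*x-1) := by rw [hD1, hD2]; ring
  have key2 : 2*x*(D1*D2) - (x*z*D2 + x*(1-z)*D1) = x*(1-x)*(2*z-1)^2*(2*x-1) := by
    rw [hD1, hD2]; ring
  have hb1 : 1 ≤ p + q := by
    rw [hp, hq, div_add_div _ _ hD1pos.ne' hD2pos.ne', le_div_iff₀ (mul_pos hD1pos hD2pos)]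
    nlinarith [key1, mul_nonneg (mul_nonneg hz0.le (by linarith : (0:ℝ) ≤ 1-z))
      (by linarith : (0:ℝ) ≤ 2*x-1)]
  have hb2 : p + q ≤ 2*x := by
    rw [hp, hq, div_add_div _ _ hD1pos.ne' hD2pos.ne', div_le_iff₀ (mul_pos hD1pos hD2pos)]
    nlinarith [key2, mul_nonneg (mul_nonneg (mul_nonneg hx0.le (by linarith : (0:ℝ) ≤ 1-x))
      (sq_nonneg (2*z-1))) (by linarith : (0:ℝ) ≤ 2*x-1)]
  constructor
  · rintro ⟨h1, h2⟩
    have hk : (0:ℝ) ≤ (y₁-y₂)-(y₄-y₃) := by linarith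
    constructor
    · nlinarith [mul_le_mul_of_nonneg_left hb2 hk]
    · nlinarith [mul_le_mul_of_nonneg_left hb1 hk]
  · rintro ⟨h1, h2⟩
    have hk : (y₁-y₂)-(y₄-y₃) ≤ (0:ℝ) := by linarith
    constructor
    · nlinarith [mul_le_mul_of_nonpos_left hb2 hk]
    · nlinarith [mul_le_mul_of_nonpos_left hb1 hk]
end

section
/- Suppose π = 1/2, x′ = 1−x, z′ = 1−z, x ≤ 1/2 and z ≤ 1/2. If y₁ − y₂ ≥ y₄ − y₃ ≥ 0, then RD_crude ≤ RD_obs ≤ RD_true; and if y₁ − y₂ ≤ y₄ − y₃ ≤ 0, then RD_crude ≥ RD_obs ≥ RD_true. (Paper's Corollary 2.) -/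
set_option maxHeartbeats 1000000

theorem cor2 (pc x x' z z' : ℝ) (y₁ y₂ y₃ y₄ : ℝ)
    (hpc : 0 < pc) (hpc1 : pc < 1)
    (hx0 : 0 < x) (hx1 : x < 1) (hx'0 : 0 < x') (hx'1 : x' < 1)
    (hz0 : 0 < z) (hz1 : z < 1) (hz'0 : 0 < z') (hz'1 : z' < 1)
    (hpch : pc = 1/2) (hx' : x' = 1 - x) (hz' : z' = 1 - z)
    (hxle : x ≤ 1/2) (hzle : z ≤ 1/2)
    (Pca Pcab Pd Pcad Pcadb Pcbd Pcbdb EYad EYadb EYbd EYbdb RDtrue RDcrude RDobs : ℝ)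
    (hPca : Pca = x*pc/(x*pc + x'*(1-pc)))
    (hPcab : Pcab = (1-x)*pc/((1-x)*pc + (1-x')*(1-pc)))
    (hPd : Pd = z*pc + z'*(1-pc))
    (hPcad : Pcad = x*z*pc/(x*z*pc + x'*z'*(1-pc)))
    (hPcadb : Pcadb = x*(1-z)*pc/(x*(1-z)*pc + x'*(1-z')*(1-pc)))
    (hPcbd : Pcbd = (1-x)*z*pc/((1-x)*z*pc + (1-x')*z'*(1-pc)))
    (hPcbdb : Pcbdb = (1-x)*(1-z)*pc/((1-x)*(1-z)*pc + (1-x')*(1-z')*(1-pc)))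
    (hEYad : EYad = y₁*Pcad + y₂*(1-Pcad))
    (hEYadb : EYadb = y₁*Pcadb + y₂*(1-Pcadb))
    (hEYbd : EYbd = y₃*Pcbd + y₄*(1-Pcbd))
    (hEYbdb : EYbdb = y₃*Pcbdb + y₄*(1-Pcbdb))
    (hRDtrue : RDtrue = (y₁-y₃)*pc + (y₂-y₄)*(1-pc))
    (hRDcrude : RDcrude = (y₁*Pca + y₂*(1-Pca)) - (y₃*Pcab + y₄*(1-Pcab)))
    (hRDobs : RDobs = (EYad - EYbd)*Pd + (EYadb - EYbdb)*(1-Pd))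
    :
    (y₁ - y₂ ≥ y₄ - y₃ ∧ y₄ - y₃ ≥ 0 → RDcrude ≤ RDobs ∧ RDobs ≤ RDtrue) ∧
    (y₁ - y₂ ≤ y₄ - y₃ ∧ y₄ - y₃ ≤ 0 → RDcrude ≥ RDobs ∧ RDobs ≥ RDtrue) := by
  subst hpch hx' hz'
  have h1x : (0:ℝ) < 1 - x := by linarith
  have h1z : (0:ℝ) < 1 - z := by linarith
  have p1 : (0:ℝ) < x*z := mul_pos hx0 hz0
  have p2 : (0:ℝ) < (1-x)*(1-z) := mul_pos h1x h1z
  have p3 : (0:ℝ) < x*(1-z) := mul_pos hx0 h1z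
  have p4 : (0:ℝ) < (1-x)*z := mul_pos h1x hz0
  have hD1 : 0 < x*z + (1-x)*(1-z) := by linarith [p1, p2]
  have hD2 : 0 < x*(1-z) + (1-x)*z := by linarith
  -- simplify conditional probabilities
  have e1 : (0:ℝ) < x*(1/2) + (1-x)*(1-1/2) := by linarith
  have e2 : (0:ℝ) < (1-x)*(1/2) + (1-(1-x))*(1-1/2) := by linarith
  have e3 : (0:ℝ) < x*z*(1/2) + (1-x)*(1-z)*(1-1/2) := by linarith [p1, p2]
  have e4 : (0:ℝ) < x*(1-z)*(1/2) + (1-x)*(1-(1-z))*(1-1/2) := by linarith [p3, p4]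
  have e5 : (0:ℝ) < (1-x)*z*(1/2) + (1-(1-x))*(1-z)*(1-1/2) := by linarith [p3, p4]
  have e6 : (0:ℝ) < (1-x)*(1-z)*(1/2) + (1-(1-x))*(1-(1-z))*(1-1/2) := by linarith [p1, p2]
  have hPca' : Pca = x := by
    rw [hPca, div_eq_iff e1.ne']; ring
  have hPcab' : Pcab = 1 - x := by
    rw [hPcab, div_eq_iff e2.ne']; ring
  have hPd' : Pd = 1/2 := by rw [hPd]; ring
  have hA : Pcad = x*z/(x*z + (1-x)*(1-z)) := by
    rw [hPcad, div_eq_div_iff e3.ne' hD1.ne']; ring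
  have hB : Pcadb = x*(1-z)/(x*(1-z) + (1-x)*z) := by
    rw [hPcadb, div_eq_div_iff e4.ne' hD2.ne']; ring
  have hC : Pcbd = 1 - Pcadb := by
    rw [hPcbd, hB, eq_sub_iff_add_eq, div_add_div _ _ e5.ne' hD2.ne',
      div_eq_one_iff_eq (by positivity)]
    ring
  have hDq : Pcbdb = 1 - Pcad := by
    rw [hPcbdb, hA, eq_sub_iff_add_eq, div_add_div _ _ e6.ne' hD1.ne',
      div_eq_one_iff_eq (by positivity)]
    ring
  -- bounds on s := (Pcad + Pcadb)/2
  have hs1 : Pcad + Pcadb ≤ 1 := by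
    rw [hA, hB, div_add_div _ _ (ne_of_gt hD1) (ne_of_gt hD2),
      div_le_one (by positivity)]
    linarith [mul_nonneg (mul_nonneg (by linarith : (0:ℝ) ≤ 1 - 2*x) hz0.le) h1z.le]
  have hs2 : 2*x ≤ Pcad + Pcadb := by
    rw [hA, hB, div_add_div _ _ (ne_of_gt hD1) (ne_of_gt hD2),
      le_div_iff₀ (by positivity)]
    linarith [mul_nonneg (mul_nonneg (mul_nonneg hx0.le (by linarith : (0:ℝ) ≤ 1 - 2*x)) h1x.le) (sq_nonneg (1 - 2*z))]
  -- canonical forms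
  have hcr : RDcrude = (y₁-y₄)*x + (y₂-y₃)*(1-x) := by
    rw [hRDcrude, hPca', hPcab']; ring
  have htr : RDtrue = (y₁-y₄)*(1/2) + (y₂-y₃)*(1/2) := by
    rw [hRDtrue]; ring
  have hob : RDobs = (y₁-y₄)*((Pcad+Pcadb)/2) + (y₂-y₃)*(1-(Pcad+Pcadb)/2) := by
    rw [hRDobs, hEYad, hEYadb, hEYbd, hEYbdb, hC, hDq, hPd']; ring
  constructor
  · rintro ⟨h1, h2⟩
    constructor
    · rw [hcr, hob]
      linarith [mul_nonneg (by linarith : (0:ℝ) ≤ (y₁-y₂)-(y₄-y₃)) (by linarith : (0:ℝ) ≤ (Pcad+Pcadb)/2 - x)]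
    · rw [htr, hob]
      linarith [mul_nonneg (by linarith : (0:ℝ) ≤ (y₁-y₂)-(y₄-y₃)) (by linarith : (0:ℝ) ≤ 1/2 - (Pcad+Pcadb)/2)]
  · rintro ⟨h1, h2⟩
    constructor
    · rw [hcr, hob]
      linarith [mul_nonneg (by linarith : (0:ℝ) ≤ (y₄-y₃)-(y₁-y₂)) (by linarith : (0:ℝ) ≤ (Pcad+Pcadb)/2 - x)]
    · rw [htr, hob]
      linarith [mul_nonneg (by linarith : (0:ℝ) ≤ (y₄-y₃)-(y₁-y₂)) (by linarith : (0:ℝ) ≤ 1/2 - (Pcad+Pcadb)/2)]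
end

section
/- Suppose π = 1/2, x′ = 1−x, z′ = 1−z, x ≥ 1/2 and z > 1/2. Then y₁ − y₂ ≥ y₄ − y₃ ≥ 0 if and only if E[Y|a,d] − E[Y|a,d̄] ≥ E[Y|ā,d̄] − E[Y|ā,d] ≥ 0; likewise, y₁ − y₂ ≤ y₄ − y₃ ≤ 0 if and only if E[Y|a,d] − E[Y|a,d̄] ≤ E[Y|ā,d̄] − E[Y|ā,d] ≤ 0. (Paper's Corollary 3.) -/
lemma cor3_aux1 (u v k : ℝ) (hk : 0 < k) :
    (u ≥ v ∧ v ≥ 0) ↔ (u*k ≥ v*k ∧ v*k ≥ 0) := by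
  constructor
  · rintro ⟨h1, h2⟩; exact ⟨by nlinarith, by nlinarith⟩
  · rintro ⟨h1, h2⟩
    constructor
    · nlinarith
    · nlinarith

lemma cor3_aux2 (u v k : ℝ) (hk : 0 < k) :
    (u ≤ v ∧ v ≤ 0) ↔ (u*k ≤ v*k ∧ v*k ≤ 0) := by
  constructor
  · rintro ⟨h1, h2⟩; exact ⟨by nlinarith, by nlinarith⟩
  · rintro ⟨h1, h2⟩
    constructor
    · nlinarith
    · nlinarith

theorem cor3 (pc x x' z z' : ℝ) (y₁ y₂ y₃ y₄ : ℝ)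
    (hpc : 0 < pc) (hpc1 : pc < 1)
    (hx0 : 0 < x) (hx1 : x < 1) (hx'0 : 0 < x') (hx'1 : x' < 1)
    (hz0 : 0 < z) (hz1 : z < 1) (hz'0 : 0 < z') (hz'1 : z' < 1)
    (hpch : pc = 1/2) (hx' : x' = 1 - x) (hz' : z' = 1 - z)
    (hxge : x ≥ 1/2) (hzgt : z > 1/2)
    (Pcad Pcadb Pcbd Pcbdb EYad EYadb EYbd EYbdb : ℝ)
    (hPcad : Pcad = x*z*pc/(x*z*pc + x'*z'*(1-pc)))
    (hPcadb : Pcadb = x*(1-z)*pc/(x*(1-z)*pc + x'*(1-z')*(1-pc)))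
    (hPcbd : Pcbd = (1-x)*z*pc/((1-x)*z*pc + (1-x')*z'*(1-pc)))
    (hPcbdb : Pcbdb = (1-x)*(1-z)*pc/((1-x)*(1-z)*pc + (1-x')*(1-z')*(1-pc)))
    (hEYad : EYad = y₁*Pcad + y₂*(1-Pcad))
    (hEYadb : EYadb = y₁*Pcadb + y₂*(1-Pcadb))
    (hEYbd : EYbd = y₃*Pcbd + y₄*(1-Pcbd))
    (hEYbdb : EYbdb = y₃*Pcbdb + y₄*(1-Pcbdb))
    :
    ((y₁ - y₂ ≥ y₄ - y₃ ∧ y₄ - y₃ ≥ 0) ↔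
      (EYad - EYadb ≥ EYbdb - EYbd ∧ EYbdb - EYbd ≥ 0)) ∧
    ((y₁ - y₂ ≤ y₄ - y₃ ∧ y₄ - y₃ ≤ 0) ↔
      (EYad - EYadb ≤ EYbdb - EYbd ∧ EYbdb - EYbd ≤ 0)) := by
  subst hpch hx' hz' hPcad hPcadb hPcbd hPcbdb hEYad hEYadb hEYbd hEYbdb
  have hx1' : 0 < 1 - x := by linarith
  have hz1' : 0 < 1 - z := by linarith
  have hD1 : 0 < x*z + (1-x)*(1-z) := by positivity
  have hD2 : 0 < x*(1-z) + (1-x)*z := by positivity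
  set K : ℝ := x*(1-x)*(2*z-1)/((x*z + (1-x)*(1-z))*(x*(1-z) + (1-x)*z)) with hK
  have hKpos : 0 < K := by
    apply div_pos
    · have : 0 < 2*z - 1 := by linarith
      positivity
    · positivity
  have e1 : x*z*(1/2) + (1-x)*(1-z)*(1-1/2) ≠ 0 := by nlinarith
  have e2 : x*(1-z)*(1/2) + (1-x)*(1-(1-z))*(1-1/2) ≠ 0 := by nlinarith
  have e3 : (1-x)*z*(1/2) + (1-(1-x))*(1-z)*(1-1/2) ≠ 0 := by nlinarith
  have e4 : (1-x)*(1-z)*(1/2) + (1-(1-x))*(1-(1-z))*(1-1/2) ≠ 0 := by nlinarith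
  have hA : (y₁*(x*z*(1/2)/(x*z*(1/2) + (1-x)*(1-z)*(1-1/2))) +
      y₂*(1-(x*z*(1/2)/(x*z*(1/2) + (1-x)*(1-z)*(1-1/2))))) -
      (y₁*(x*(1-z)*(1/2)/(x*(1-z)*(1/2) + (1-x)*(1-(1-z))*(1-1/2))) +
      y₂*(1-(x*(1-z)*(1/2)/(x*(1-z)*(1/2) + (1-x)*(1-(1-z))*(1-1/2))))) = (y₁ - y₂)*K := by
    rw [hK, show x*z*(1/2) + (1-x)*(1-z)*(1-1/2) = (x*z + (1-x)*(1-z))/2 by ring,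
      show x*(1-z)*(1/2) + (1-x)*(1-(1-z))*(1-1/2) = (x*(1-z) + (1-x)*z)/2 by ring]
    field_simp; ring
  have hB : (y₃*((1-x)*(1-z)*(1/2)/((1-x)*(1-z)*(1/2) + (1-(1-x))*(1-(1-z))*(1-1/2))) +
      y₄*(1-((1-x)*(1-z)*(1/2)/((1-x)*(1-z)*(1/2) + (1-(1-x))*(1-(1-z))*(1-1/2))))) -
      (y₃*((1-x)*z*(1/2)/((1-x)*z*(1/2) + (1-(1-x))*(1-z)*(1-1/2))) +
      y₄*(1-((1-x)*z*(1/2)/((1-x)*z*(1/2) + (1-(1-x))*(1-z)*(1-1/2))))) = (y₄ - y₃)*K := by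
    rw [hK, show (1-x)*(1-z)*(1/2) + (1-(1-x))*(1-(1-z))*(1-1/2) = (x*z + (1-x)*(1-z))/2 by ring,
      show (1-x)*z*(1/2) + (1-(1-x))*(1-z)*(1-1/2) = (x*(1-z) + (1-x)*z)/2 by ring]
    field_simp; ring
  rw [hA, hB]
  exact ⟨cor3_aux1 _ _ _ hKpos, cor3_aux2 _ _ _ hKpos⟩
end

section
/- Suppose π = 1/2, x′ = 1−x, z′ = 1−z, x ≤ 1/2 and z < 1/2. Then y₁ − y₂ ≥ y₄ − y₃ ≥ 0 if and only if E[Y|a,d] − E[Y|a,d̄] ≤ E[Y|ā,d̄] − E[Y|ā,d] ≤ 0; likewise, y₁ − y₂ ≤ y₄ − y₃ ≤ 0 if and only if E[Y|a,d] − E[Y|a,d̄] ≥ E[Y|ā,d̄] − E[Y|ā,d] ≥ 0. (Paper's Corollary 4.) -/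
lemma cor4_aux (u v D : ℝ) (hD : D < 0) :
    ((u ≥ v ∧ v ≥ 0) ↔ (u * D ≤ v * D ∧ v * D ≤ 0)) ∧
    ((u ≤ v ∧ v ≤ 0) ↔ (u * D ≥ v * D ∧ v * D ≥ 0)) := by
  constructor
  · constructor
    · rintro ⟨h1, h2⟩
      exact ⟨by nlinarith, by nlinarith⟩
    · rintro ⟨h1, h2⟩
      exact ⟨by nlinarith, by nlinarith⟩
  · constructor
    · rintro ⟨h1, h2⟩
      exact ⟨by nlinarith, by nlinarith⟩
    · rintro ⟨h1, h2⟩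
      exact ⟨by nlinarith, by nlinarith⟩

theorem cor4 (pc x x' z z' : ℝ) (y₁ y₂ y₃ y₄ : ℝ)
    (hpc : 0 < pc) (hpc1 : pc < 1)
    (hx0 : 0 < x) (hx1 : x < 1) (hx'0 : 0 < x') (hx'1 : x' < 1)
    (hz0 : 0 < z) (hz1 : z < 1) (hz'0 : 0 < z') (hz'1 : z' < 1)
    (hpch : pc = 1/2) (hx' : x' = 1 - x) (hz' : z' = 1 - z)
    (hxle : x ≤ 1/2) (hzlt : z < 1/2)
    (Pcad Pcadb Pcbd Pcbdb EYad EYadb EYbd EYbdb : ℝ)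
    (hPcad : Pcad = x*z*pc/(x*z*pc + x'*z'*(1-pc)))
    (hPcadb : Pcadb = x*(1-z)*pc/(x*(1-z)*pc + x'*(1-z')*(1-pc)))
    (hPcbd : Pcbd = (1-x)*z*pc/((1-x)*z*pc + (1-x')*z'*(1-pc)))
    (hPcbdb : Pcbdb = (1-x)*(1-z)*pc/((1-x)*(1-z)*pc + (1-x')*(1-z')*(1-pc)))
    (hEYad : EYad = y₁*Pcad + y₂*(1-Pcad))
    (hEYadb : EYadb = y₁*Pcadb + y₂*(1-Pcadb))
    (hEYbd : EYbd = y₃*Pcbd + y₄*(1-Pcbd))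
    (hEYbdb : EYbdb = y₃*Pcbdb + y₄*(1-Pcbdb))
    :
    ((y₁ - y₂ ≥ y₄ - y₃ ∧ y₄ - y₃ ≥ 0) ↔
      (EYad - EYadb ≤ EYbdb - EYbd ∧ EYbdb - EYbd ≤ 0)) ∧
    ((y₁ - y₂ ≤ y₄ - y₃ ∧ y₄ - y₃ ≤ 0) ↔
      (EYad - EYadb ≥ EYbdb - EYbd ∧ EYbdb - EYbd ≥ 0)) := by
  subst hpch hx' hz'
  have hA : (0:ℝ) < x*z*(1/2) + (1-x)*(1-z)*(1-1/2) := by nlinarith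
  have hB : (0:ℝ) < x*(1-z)*(1/2) + (1-x)*(1-(1-z))*(1-1/2) := by nlinarith
  have hB' : (0:ℝ) < (1-x)*z*(1/2) + (1-(1-x))*(1-z)*(1-1/2) := by nlinarith
  have hA' : (0:ℝ) < (1-x)*(1-z)*(1/2) + (1-(1-x))*(1-(1-z))*(1-1/2) := by nlinarith
  -- Pcbd = 1 - Pcadb, Pcbdb = 1 - Pcad
  have e1 : Pcbd = 1 - Pcadb := by
    rw [hPcbd, hPcadb]
    rw [eq_sub_iff_add_eq, div_add_div _ _ hB'.ne' hB.ne', div_eq_one_iff_eq (mul_pos hB' hB).ne']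
    ring
  have e2 : Pcbdb = 1 - Pcad := by
    rw [hPcbdb, hPcad]
    rw [eq_sub_iff_add_eq, div_add_div _ _ hA'.ne' hA.ne', div_eq_one_iff_eq (mul_pos hA' hA).ne']
    ring
  have hd : Pcad - Pcadb < 0 := by
    rw [hPcad, hPcadb]
    rw [sub_neg, div_lt_div_iff₀ hA hB]
    nlinarith [mul_pos hx0 (sub_pos.mpr hx1), sub_pos.mpr hzlt]
  have f1 : EYad - EYadb = (y₁ - y₂) * (Pcad - Pcadb) := by
    rw [hEYad, hEYadb]; ring
  have f2 : EYbdb - EYbd = (y₄ - y₃) * (Pcad - Pcadb) := by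
    rw [hEYbdb, hEYbd, e1, e2]; ring
  rw [f1, f2]
  exact cor4_aux _ _ _ hd
end

section
/- Suppose π = 1/2, z′ = 1−z with z ≥ 1/2, and 1−x′ ≥ x ≥ 1/2 (i.e. P(A=ā|C=c̄) ≥ P(A=a|C=c) ≥ 1/2). If y₁ − y₂ ≥ y₄ − y₃ ≥ 0, then RD_crude ≥ RD_true and RD_obs ≥ RD_true; and if y₁ − y₂ ≤ y₄ − y₃ ≤ 0, then RD_crude ≤ RD_true and RD_obs ≤ RD_true. (Peña 2020, Theorems 5–6, as re-stated in the paper.) -/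
set_option maxHeartbeats 1000000 in
theorem pena2020_thm5_6 (pc x x' z z' : ℝ) (y₁ y₂ y₃ y₄ : ℝ)
    (hpc : 0 < pc) (hpc1 : pc < 1)
    (hx0 : 0 < x) (hx1 : x < 1) (hx'0 : 0 < x') (hx'1 : x' < 1)
    (hz0 : 0 < z) (hz1 : z < 1) (hz'0 : 0 < z') (hz'1 : z' < 1)
    (hpch : pc = 1/2) (hz' : z' = 1 - z) (hzge : z ≥ 1/2)
    (hxx' : 1 - x' ≥ x) (hxge : x ≥ 1/2)
    (Pca Pcab Pd Pcad Pcadb Pcbd Pcbdb EYad EYadb EYbd EYbdb RDtrue RDcrude RDobs : ℝ)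
    (hPca : Pca = x*pc/(x*pc + x'*(1-pc)))
    (hPcab : Pcab = (1-x)*pc/((1-x)*pc + (1-x')*(1-pc)))
    (hPd : Pd = z*pc + z'*(1-pc))
    (hPcad : Pcad = x*z*pc/(x*z*pc + x'*z'*(1-pc)))
    (hPcadb : Pcadb = x*(1-z)*pc/(x*(1-z)*pc + x'*(1-z')*(1-pc)))
    (hPcbd : Pcbd = (1-x)*z*pc/((1-x)*z*pc + (1-x')*z'*(1-pc)))
    (hPcbdb : Pcbdb = (1-x)*(1-z)*pc/((1-x)*(1-z)*pc + (1-x')*(1-z')*(1-pc)))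
    (hEYad : EYad = y₁*Pcad + y₂*(1-Pcad))
    (hEYadb : EYadb = y₁*Pcadb + y₂*(1-Pcadb))
    (hEYbd : EYbd = y₃*Pcbd + y₄*(1-Pcbd))
    (hEYbdb : EYbdb = y₃*Pcbdb + y₄*(1-Pcbdb))
    (hRDtrue : RDtrue = (y₁-y₃)*pc + (y₂-y₄)*(1-pc))
    (hRDcrude : RDcrude = (y₁*Pca + y₂*(1-Pca)) - (y₃*Pcab + y₄*(1-Pcab)))
    (hRDobs : RDobs = (EYad - EYbd)*Pd + (EYadb - EYbdb)*(1-Pd))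
    :
    (y₁ - y₂ ≥ y₄ - y₃ ∧ y₄ - y₃ ≥ 0 → RDcrude ≥ RDtrue ∧ RDobs ≥ RDtrue) ∧
    (y₁ - y₂ ≤ y₄ - y₃ ∧ y₄ - y₃ ≤ 0 → RDcrude ≤ RDtrue ∧ RDobs ≤ RDtrue) := by
  subst hpch hz'
  have hz1' : (0:ℝ) < 1 - z := by linarith
  have hx1' : (0:ℝ) < 1 - x := by linarith
  have hx'1' : (0:ℝ) < 1 - x' := by linarith
  have m1 : (0:ℝ) < x*z := mul_pos hx0 hz0
  have m2 : (0:ℝ) < x'*(1-z) := mul_pos hx'0 hz1'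
  have m3 : (0:ℝ) < x*(1-z) := mul_pos hx0 hz1'
  have m4 : (0:ℝ) < x'*z := mul_pos hx'0 hz0
  have m5 : (0:ℝ) < (1-x)*z := mul_pos hx1' hz0
  have m6 : (0:ℝ) < (1-x')*(1-z) := mul_pos hx'1' hz1'
  have m7 : (0:ℝ) < (1-x)*(1-z) := mul_pos hx1' hz1'
  have m8 : (0:ℝ) < (1-x')*z := mul_pos hx'1' hz0
  have m9 : (0:ℝ) < x*(1-x') := mul_pos hx0 hx'1'
  have m10 : (0:ℝ) < x'*(1-x) := mul_pos hx'0 hx1'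
  have hd1 : (0:ℝ) < x*z + x'*(1-z) := by linarith
  have hd2 : (0:ℝ) < x*(1-z) + x'*z := by linarith
  have hd3 : (0:ℝ) < (1-x)*z + (1-x')*(1-z) := by linarith
  have hd4 : (0:ℝ) < (1-x)*(1-z) + (1-x')*z := by linarith
  have hda : (0:ℝ) < x + x' := by linarith
  have hdb : (0:ℝ) < (1-x) + (1-x') := by linarith
  have hxmx' : (0:ℝ) ≤ x - x' := by linarith
  have hxpx' : (0:ℝ) ≤ 1 - x - x' := by linarith
  -- clean forms of the conditional probabilities
  have ePca : Pca = x/(x+x') := by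
    rw [hPca, div_eq_div_iff (by linarith) hda.ne']; ring
  have ePcab : Pcab = (1-x)/((1-x)+(1-x')) := by
    rw [hPcab, div_eq_div_iff (by linarith) hdb.ne']; ring
  have ePd : Pd = 1/2 := by rw [hPd]; ring
  have ePcad : Pcad = x*z/(x*z + x'*(1-z)) := by
    rw [hPcad, div_eq_div_iff (by linarith) hd1.ne']; ring
  have ePcadb : Pcadb = x*(1-z)/(x*(1-z) + x'*z) := by
    rw [hPcadb, div_eq_div_iff (by linarith) hd2.ne']; ring
  have ePcbd : Pcbd = (1-x)*z/((1-x)*z + (1-x')*(1-z)) := by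
    rw [hPcbd, div_eq_div_iff (by linarith) hd3.ne']; ring
  have ePcbdb : Pcbdb = (1-x)*(1-z)/((1-x)*(1-z) + (1-x')*z) := by
    rw [hPcbdb, div_eq_div_iff (by linarith) hd4.ne']; ring
  -- key inequality A : Pca ≥ 1/2
  have hA : Pca ≥ 1/2 := by
    rw [ePca, ge_iff_le, le_div_iff₀ hda]; linarith
  -- key inequality B : Pca + Pcab ≥ 1
  have hB : Pca + Pcab ≥ 1 := by
    rw [ePca, ePcab, div_add_div _ _ hda.ne' hdb.ne', ge_iff_le,
      le_div_iff₀ (mul_pos hda hdb)]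
    have e : x*((1-x)+(1-x')) + (1-x)*(x+x') - 1*((x+x')*((1-x)+(1-x')))
        = (x-x')*(1-x-x') := by ring
    have := mul_nonneg hxmx' hxpx'
    linarith
  -- key inequality C : Pcad + Pcadb ≥ 1
  have hC : Pcad + Pcadb ≥ 1 := by
    rw [ePcad, ePcadb, div_add_div _ _ hd1.ne' hd2.ne', ge_iff_le,
      le_div_iff₀ (mul_pos hd1 hd2)]
    have e : x*z*(x*(1-z)+x'*z) + x*(1-z)*(x*z+x'*(1-z))
        - 1*((x*z+x'*(1-z))*(x*(1-z)+x'*z)) = (z*(1-z))*((x-x')*(x+x')) := by ring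
    have := mul_nonneg (mul_nonneg hz0.le hz1'.le) (mul_nonneg hxmx' hda.le)
    linarith
  -- key inequality D : Pcad + Pcadb + Pcbd + Pcbdb ≥ 2
  have hD : Pcad + Pcadb + Pcbd + Pcbdb ≥ 2 := by
    have huv : (0:ℝ) ≤ x*(1-x) - x'*(1-x') := by
      have e : x*(1-x) - x'*(1-x') = (x-x')*(1-x-x') := by ring
      have := mul_nonneg hxmx' hxpx'
      linarith
    have h24 : (0:ℝ) ≤ (x*(1-z) + x'*z)*((1-x)*(1-z) + (1-x')*z) - x'*(1-x')*z^2 := by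
      have e : (x*(1-z) + x'*z)*((1-x)*(1-z) + (1-x')*z) - x'*(1-x')*z^2
          = (x*(1-x))*((1-z)^2) + (x*(1-x') + x'*(1-x))*(z*(1-z)) := by ring
      have h1 := mul_nonneg (mul_nonneg hx0.le hx1'.le) (mul_nonneg hz1'.le hz1'.le)
      have h2 := mul_nonneg (by linarith : (0:ℝ) ≤ x*(1-x') + x'*(1-x))
        (mul_nonneg hz0.le hz1'.le)
      linarith
    have h13 : (0:ℝ) ≤ (x*z + x'*(1-z))*((1-x)*z + (1-x')*(1-z)) - x'*(1-x')*(1-z)^2 := by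
      have e : (x*z + x'*(1-z))*((1-x)*z + (1-x')*(1-z)) - x'*(1-x')*(1-z)^2
          = (x*(1-x))*(z^2) + (x*(1-x') + x'*(1-x))*(z*(1-z)) := by ring
      have h1 := mul_nonneg (mul_nonneg hx0.le hx1'.le) (mul_nonneg hz0.le hz0.le)
      have h2 := mul_nonneg (by linarith : (0:ℝ) ≤ x*(1-x') + x'*(1-x))
        (mul_nonneg hz0.le hz1'.le)
      linarith
    have hfac : (0:ℝ) ≤ z^2*((x*(1-z) + x'*z)*((1-x)*(1-z) + (1-x')*z))
        + (1-z)^2*((x*z + x'*(1-z))*((1-x)*z + (1-x')*(1-z)))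
        - x'*(1-x')*(z^2 - (1-z)^2)^2 := by
      have e : z^2*((x*(1-z) + x'*z)*((1-x)*(1-z) + (1-x')*z))
          + (1-z)^2*((x*z + x'*(1-z))*((1-x)*z + (1-x')*(1-z)))
          - x'*(1-x')*(z^2 - (1-z)^2)^2
          = z^2*((x*(1-z) + x'*z)*((1-x)*(1-z) + (1-x')*z) - x'*(1-x')*z^2)
          + (1-z)^2*((x*z + x'*(1-z))*((1-x)*z + (1-x')*(1-z)) - x'*(1-x')*(1-z)^2)
          + 2*((x'*(1-x'))*(z^2*(1-z)^2)) := by ring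
      have h1 := mul_nonneg (mul_nonneg hz0.le hz0.le) h24
      have h2 := mul_nonneg (mul_nonneg hz1'.le hz1'.le) h13
      have h3 := mul_nonneg (mul_nonneg hx'0.le hx'1'.le)
        (mul_nonneg (mul_nonneg hz0.le hz0.le) (mul_nonneg hz1'.le hz1'.le))
      linarith
    have hNum : (0:ℝ) ≤ (x*(1-x)*z^2 - x'*(1-x')*(1-z)^2)*((x*(1-z) + x'*z)*((1-x)*(1-z) + (1-x')*z))
        + (x*(1-x)*(1-z)^2 - x'*(1-x')*z^2)*((x*z + x'*(1-z))*((1-x)*z + (1-x')*(1-z))) := by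
      have key : (x*(1-x)*z^2 - x'*(1-x')*(1-z)^2)*((x*(1-z) + x'*z)*((1-x)*(1-z) + (1-x')*z))
          + (x*(1-x)*(1-z)^2 - x'*(1-x')*z^2)*((x*z + x'*(1-z))*((1-x)*z + (1-x')*(1-z)))
          = (x*(1-x) - x'*(1-x')) *
            (z^2*((x*(1-z) + x'*z)*((1-x)*(1-z) + (1-x')*z))
            + (1-z)^2*((x*z + x'*(1-z))*((1-x)*z + (1-x')*(1-z)))
            - x'*(1-x')*(z^2 - (1-z)^2)^2) := by ring
      rw [key]
      exact mul_nonneg huv hfac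
    have hsub : Pcad + Pcadb + Pcbd + Pcbdb - 2 =
        ((x*(1-x)*z^2 - x'*(1-x')*(1-z)^2)*((x*(1-z) + x'*z)*((1-x)*(1-z) + (1-x')*z))
        + (x*(1-x)*(1-z)^2 - x'*(1-x')*z^2)*((x*z + x'*(1-z))*((1-x)*z + (1-x')*(1-z))))
        / ((x*z + x'*(1-z))*(x*(1-z) + x'*z)*((1-x)*z + (1-x')*(1-z))*((1-x)*(1-z) + (1-x')*z)) := by
      rw [ePcad, ePcadb, ePcbd, ePcbdb]
      field_simp
      ring
    have hpos : (0:ℝ) ≤ Pcad + Pcadb + Pcbd + Pcbdb - 2 := by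
      rw [hsub]
      exact div_nonneg hNum (by positivity)
    linarith
  constructor
  · rintro ⟨h1, h2⟩
    have p1 := mul_nonneg (by linarith : (0:ℝ) ≤ (y₁-y₂)-(y₄-y₃)) (by linarith : (0:ℝ) ≤ Pca - 1/2)
    have p2 := mul_nonneg h2 (by linarith : (0:ℝ) ≤ Pca + Pcab - 1)
    have p3 := mul_nonneg (by linarith : (0:ℝ) ≤ (y₁-y₂)-(y₄-y₃)) (by linarith : (0:ℝ) ≤ Pcad + Pcadb - 1)
    have p4 := mul_nonneg h2 (by linarith : (0:ℝ) ≤ Pcad + Pcadb + Pcbd + Pcbdb - 2)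
    constructor
    · rw [hRDcrude, hRDtrue]
      have e : ((y₁*Pca + y₂*(1-Pca)) - (y₃*Pcab + y₄*(1-Pcab)))
          - ((y₁-y₃)*(1/2) + (y₂-y₄)*(1-1/2))
          = ((y₁-y₂)-(y₄-y₃))*(Pca - 1/2) + (y₄-y₃)*(Pca + Pcab - 1) := by ring
      linarith
    · rw [hRDobs, hEYad, hEYadb, hEYbd, hEYbdb, hRDtrue, ePd]
      have e : (((y₁*Pcad + y₂*(1-Pcad)) - (y₃*Pcbd + y₄*(1-Pcbd)))*(1/2)
          + ((y₁*Pcadb + y₂*(1-Pcadb)) - (y₃*Pcbdb + y₄*(1-Pcbdb)))*(1-1/2))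
          - ((y₁-y₃)*(1/2) + (y₂-y₄)*(1-1/2))
          = (((y₁-y₂)-(y₄-y₃))*(Pcad + Pcadb - 1)
            + (y₄-y₃)*(Pcad + Pcadb + Pcbd + Pcbdb - 2))/2 := by ring
      linarith
  · rintro ⟨h1, h2⟩
    have p1 := mul_nonneg (by linarith : (0:ℝ) ≤ (y₄-y₃)-(y₁-y₂)) (by linarith : (0:ℝ) ≤ Pca - 1/2)
    have p2 := mul_nonneg (by linarith : (0:ℝ) ≤ -(y₄-y₃)) (by linarith : (0:ℝ) ≤ Pca + Pcab - 1)
    have p3 := mul_nonneg (by linarith : (0:ℝ) ≤ (y₄-y₃)-(y₁-y₂)) (by linarith : (0:ℝ) ≤ Pcad + Pcadb - 1)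
    have p4 := mul_nonneg (by linarith : (0:ℝ) ≤ -(y₄-y₃)) (by linarith : (0:ℝ) ≤ Pcad + Pcadb + Pcbd + Pcbdb - 2)
    constructor
    · rw [hRDcrude, hRDtrue]
      have e : ((y₁*Pca + y₂*(1-Pca)) - (y₃*Pcab + y₄*(1-Pcab)))
          - ((y₁-y₃)*(1/2) + (y₂-y₄)*(1-1/2))
          = ((y₁-y₂)-(y₄-y₃))*(Pca - 1/2) + (y₄-y₃)*(Pca + Pcab - 1) := by ring
      linarith
    · rw [hRDobs, hEYad, hEYadb, hEYbd, hEYbdb, hRDtrue, ePd]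
      have e : (((y₁*Pcad + y₂*(1-Pcad)) - (y₃*Pcbd + y₄*(1-Pcbd)))*(1/2)
          + ((y₁*Pcadb + y₂*(1-Pcadb)) - (y₃*Pcbdb + y₄*(1-Pcbdb)))*(1-1/2))
          - ((y₁-y₃)*(1/2) + (y₂-y₄)*(1-1/2))
          = (((y₁-y₂)-(y₄-y₃))*(Pcad + Pcadb - 1)
            + (y₄-y₃)*(Pcad + Pcadb + Pcbd + Pcbdb - 2))/2 := by ring
      linarith
end

section
/- Suppose π = 1/2, 1−x′ ≥ x ≥ 1/2 (i.e. P(A=ā|C=c̄) ≥ P(A=a|C=c) ≥ 1/2) and 1−z′ ≥ z ≥ 1/2 (i.e. P(D=d̄|C=c̄) ≥ P(D=d|C=c) ≥ 1/2). If y₁ − y₂ ≥ y₄ − y₃ ≥ 0, then RD_crude ≥ RD_true and RD_obs ≥ RD_true; and if y₁ − y₂ ≤ y₄ − y₃ ≤ 0, then RD_crude ≤ RD_true and RD_obs ≤ RD_true. (Paper's Theorem 9.) -/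
set_option maxHeartbeats 2000000

private lemma obs_aux (x x' z z' a b : ℝ)
    (hx1 : x < 1) (hx'0 : 0 < x') (hz1 : z < 1) (hz'0 : 0 < z')
    (hs : x' ≤ 1 - x) (hx : 1/2 ≤ x) (ht : z' ≤ 1 - z) (hz : 1/2 ≤ z)
    (hab : b ≤ a) (hb : 0 ≤ b) :
    0 ≤ (x - x') * ((a - b) * (x * (z*(1-z)) + x' * (z'*(1-z'))) *
        ((((1-x)*z + (1-x')*z') * ((1-x)*(1-z) + (1-x')*(1-z')))) +
      b * (2*(1-x-x') * ((x*(1-x)) * (z*(1-z))^2 + (x'*(1-x')) * (z'*(1-z'))^2)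
        + ((x*(1-x))*(1-2*x') - (x'*(1-x'))*(2*x-1)
            + (1-x-x') * (x*(1-x') + x'*(1-x))) * ((z*(1-z)) * (z'*(1-z')))
        + ((x*(1-x))*(z*(1-z))*(1-2*x') - (x'*(1-x'))*(z'*(1-z'))*(2*x-1)) * (z-z')^2)) := by
  have hxx : 0 ≤ x - x' := by linarith
  have hu : 0 ≤ z*(1-z) := mul_nonneg (by linarith) (by linarith)
  have hv : 0 ≤ z'*(1-z') := mul_nonneg (by linarith) (by linarith)
  have hP : 0 ≤ x*(1-x) := mul_nonneg (by linarith) (by linarith)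
  have hQ : 0 ≤ x'*(1-x') := mul_nonneg (by linarith) (by linarith)
  have hPQ : x'*(1-x') ≤ x*(1-x) := by
    nlinarith [mul_nonneg hxx (show (0:ℝ) ≤ 1-x-x' by linarith)]
  have huv : z'*(1-z') ≤ z*(1-z) := by
    nlinarith [mul_nonneg (show (0:ℝ) ≤ z-z' by linarith) (show (0:ℝ) ≤ 1-z-z' by linarith)]
  have h2x : 2*x - 1 ≤ 1 - 2*x' := by linarith
  have h2x0 : 0 ≤ 2*x - 1 := by linarith
  have h2x' : 0 ≤ 1 - 2*x' := by linarith
  have hC1 : 0 ≤ (x*(1-x))*(1-2*x') - (x'*(1-x'))*(2*x-1)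
      + (1-x-x') * (x*(1-x') + x'*(1-x)) := by
    have h1 : (x'*(1-x'))*(2*x-1) ≤ (x*(1-x))*(1-2*x') := by nlinarith
    have h2 : 0 ≤ (1-x-x') * (x*(1-x') + x'*(1-x)) := by
      apply mul_nonneg (by linarith); nlinarith
    linarith
  have hC2 : 0 ≤ (x*(1-x))*(z*(1-z))*(1-2*x') - (x'*(1-x'))*(z'*(1-z'))*(2*x-1) := by
    have hPu : (x'*(1-x'))*(z'*(1-z')) ≤ (x*(1-x))*(z*(1-z)) := by nlinarith
    have p1 : 0 ≤ ((x*(1-x))*(z*(1-z)) - (x'*(1-x'))*(z'*(1-z'))) * (1-2*x') :=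
      mul_nonneg (by linarith) h2x'
    have p2 : 0 ≤ ((x'*(1-x'))*(z'*(1-z'))) * ((1-2*x') - (2*x-1)) :=
      mul_nonneg (mul_nonneg hQ hv) (by linarith)
    nlinarith [p1, p2]
  apply mul_nonneg hxx
  have t0 : 0 ≤ (a - b) * (x * (z*(1-z)) + x' * (z'*(1-z'))) *
      ((((1-x)*z + (1-x')*z') * ((1-x)*(1-z) + (1-x')*(1-z')))) := by
    apply mul_nonneg
    · apply mul_nonneg (by linarith)
      exact add_nonneg (mul_nonneg (by linarith) hu) (mul_nonneg (by linarith) hv)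
    · apply mul_nonneg
      · exact add_nonneg (mul_nonneg (by linarith) (by linarith)) (mul_nonneg (by linarith) (by linarith))
      · exact add_nonneg (mul_nonneg (by linarith) (by linarith)) (mul_nonneg (by linarith) (by linarith))
  have t1 : 0 ≤ 2*(1-x-x') * ((x*(1-x)) * (z*(1-z))^2 + (x'*(1-x')) * (z'*(1-z'))^2) := by
    apply mul_nonneg (by linarith)
    exact add_nonneg (mul_nonneg hP (sq_nonneg _)) (mul_nonneg hQ (sq_nonneg _))
  have t2 : 0 ≤ ((x*(1-x))*(1-2*x') - (x'*(1-x'))*(2*x-1)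
          + (1-x-x') * (x*(1-x') + x'*(1-x))) * ((z*(1-z)) * (z'*(1-z'))) :=
    mul_nonneg hC1 (mul_nonneg hu hv)
  have t3 : 0 ≤ ((x*(1-x))*(z*(1-z))*(1-2*x') - (x'*(1-x'))*(z'*(1-z'))*(2*x-1)) * (z-z')^2 :=
    mul_nonneg hC2 (sq_nonneg _)
  have hbR : 0 ≤ b * (2*(1-x-x') * ((x*(1-x)) * (z*(1-z))^2 + (x'*(1-x')) * (z'*(1-z'))^2)
        + ((x*(1-x))*(1-2*x') - (x'*(1-x'))*(2*x-1)
            + (1-x-x') * (x*(1-x') + x'*(1-x))) * ((z*(1-z)) * (z'*(1-z')))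
        + ((x*(1-x))*(z*(1-z))*(1-2*x') - (x'*(1-x'))*(z'*(1-z'))*(2*x-1)) * (z-z')^2) :=
    mul_nonneg hb (by linarith)
  exact add_nonneg t0 hbR

private lemma obs_ge (x x' z z' a b : ℝ)
    (hx0 : 0 < x) (hx1 : x < 1) (hx'0 : 0 < x') (hx'1 : x' < 1)
    (hz0 : 0 < z) (hz1 : z < 1) (hz'0 : 0 < z') (hz'1 : z' < 1)
    (hs : x' ≤ 1 - x) (hx : 1/2 ≤ x) (ht : z' ≤ 1 - z) (hz : 1/2 ≤ z)
    (hab : b ≤ a) (hb : 0 ≤ b) :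
    0 ≤ (1/2)*((z+z')*(a*(x*z/(x*z+x'*z') - 1/2) + b*((1-x)*z/((1-x)*z+(1-x')*z') - 1/2))
     + (2-z-z')*(a*(x*(1-z)/(x*(1-z)+x'*(1-z')) - 1/2)
       + b*((1-x)*(1-z)/((1-x)*(1-z)+(1-x')*(1-z')) - 1/2))) := by
  have hd1 : (0:ℝ) < x*z + x'*z' := by positivity
  have hd2 : (0:ℝ) < (1-x)*z + (1-x')*z' := by nlinarith
  have hd3 : (0:ℝ) < x*(1-z) + x'*(1-z') := by nlinarith
  have hd4 : (0:ℝ) < (1-x)*(1-z) + (1-x')*(1-z') := by nlinarith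
  have e1 : a*(x*z/(x*z+x'*z') - 1/2) + b*((1-x)*z/((1-x)*z+(1-x')*z') - 1/2)
      = (a*(x*z-x'*z')*((1-x)*z+(1-x')*z') + b*((1-x)*z-(1-x')*z')*(x*z+x'*z')) /
        (2*((x*z+x'*z')*((1-x)*z+(1-x')*z'))) := by
    rw [div_sub' hd1.ne', div_sub' hd2.ne', ← mul_div_assoc a, ← mul_div_assoc b, div_add_div _ _ hd1.ne' hd2.ne', div_eq_div_iff (by positivity) (by positivity)]
    ring
  have e2 : a*(x*(1-z)/(x*(1-z)+x'*(1-z')) - 1/2)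
      + b*((1-x)*(1-z)/((1-x)*(1-z)+(1-x')*(1-z')) - 1/2)
      = (a*(x*(1-z)-x'*(1-z'))*((1-x)*(1-z)+(1-x')*(1-z'))
          + b*((1-x)*(1-z)-(1-x')*(1-z'))*(x*(1-z)+x'*(1-z'))) /
        (2*((x*(1-z)+x'*(1-z'))*((1-x)*(1-z)+(1-x')*(1-z')))) := by
    rw [div_sub' hd3.ne', div_sub' hd4.ne', ← mul_div_assoc a, ← mul_div_assoc b, div_add_div _ _ hd3.ne' hd4.ne', div_eq_div_iff (by positivity) (by positivity)]
    ring
  rw [e1, e2]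
  set A := a*(x*z-x'*z')*((1-x)*z+(1-x')*z') + b*((1-x)*z-(1-x')*z')*(x*z+x'*z') with hA
  set B := a*(x*(1-z)-x'*(1-z'))*((1-x)*(1-z)+(1-x')*(1-z'))
          + b*((1-x)*(1-z)-(1-x')*(1-z'))*(x*(1-z)+x'*(1-z')) with hB
  set C12 := (x*z+x'*z')*((1-x)*z+(1-x')*z') with hC12
  set C34 := (x*(1-z)+x'*(1-z'))*((1-x)*(1-z)+(1-x')*(1-z')) with hC34
  have hC12p : 0 < C12 := mul_pos hd1 hd2
  have hC34p : 0 < C34 := mul_pos hd3 hd4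
  have ecomb : (1/2)*((z+z')*(A/(2*C12)) + (2-z-z')*(B/(2*C34)))
      = ((z+z')*A*C34 + (2-z-z')*B*C12) / (4*(C12*C34)) := by
    field_simp
    ring
  rw [ecomb]
  apply div_nonneg _ (by positivity)
  have e4 : (z+z')*A*C34 + (2-z-z')*B*C12
      = 2*((x - x') * ((a - b) * (x * (z*(1-z)) + x' * (z'*(1-z'))) *
        ((((1-x)*z + (1-x')*z') * ((1-x)*(1-z) + (1-x')*(1-z')))) +
      b * (2*(1-x-x') * ((x*(1-x)) * (z*(1-z))^2 + (x'*(1-x')) * (z'*(1-z'))^2)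
        + ((x*(1-x))*(1-2*x') - (x'*(1-x'))*(2*x-1)
            + (1-x-x') * (x*(1-x') + x'*(1-x))) * ((z*(1-z)) * (z'*(1-z')))
        + ((x*(1-x))*(z*(1-z))*(1-2*x') - (x'*(1-x'))*(z'*(1-z'))*(2*x-1)) * (z-z')^2))) := by
    rw [hA, hB, hC12, hC34]; ring
  rw [e4]
  have := obs_aux x x' z z' a b hx1 hx'0 hz1 hz'0 hs hx ht hz hab hb
  linarith

private lemma crude_ge (x x' a b : ℝ)
    (hx0 : 0 < x) (hx1 : x < 1) (hx'0 : 0 < x') (hx'1 : x' < 1)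
    (hs : x' ≤ 1 - x) (hx : 1/2 ≤ x) (hab : b ≤ a) (hb : 0 ≤ b) :
    0 ≤ a*(x/(x+x') - 1/2) + b*((1-x)/(2-x-x') - 1/2) := by
  have h1 : (0:ℝ) < x + x' := by linarith
  have h2 : (0:ℝ) < 2 - x - x' := by linarith
  have e1 : a*(x/(x+x') - 1/2) + b*((1-x)/(2-x-x') - 1/2)
      = ((x - x') * ((a - b) + (a + b) * (1 - x - x'))) / (2*((x+x')*(2-x-x'))) := by
    field_simp
    ring
  rw [e1]
  apply div_nonneg _ (by positivity)
  have hxx : 0 ≤ x - x' := by linarith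
  have : 0 ≤ (a - b) + (a + b) * (1 - x - x') := by nlinarith
  exact mul_nonneg hxx this

theorem thm9 (pc x x' z z' : ℝ) (y₁ y₂ y₃ y₄ : ℝ)
    (hpc : 0 < pc) (hpc1 : pc < 1)
    (hx0 : 0 < x) (hx1 : x < 1) (hx'0 : 0 < x') (hx'1 : x' < 1)
    (hz0 : 0 < z) (hz1 : z < 1) (hz'0 : 0 < z') (hz'1 : z' < 1)
    (hpch : pc = 1/2)
    (hxx' : 1 - x' ≥ x) (hxge : x ≥ 1/2)
    (hzz' : 1 - z' ≥ z) (hzge : z ≥ 1/2)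
    (Pca Pcab Pd Pcad Pcadb Pcbd Pcbdb EYad EYadb EYbd EYbdb RDtrue RDcrude RDobs : ℝ)
    (hPca : Pca = x*pc/(x*pc + x'*(1-pc)))
    (hPcab : Pcab = (1-x)*pc/((1-x)*pc + (1-x')*(1-pc)))
    (hPd : Pd = z*pc + z'*(1-pc))
    (hPcad : Pcad = x*z*pc/(x*z*pc + x'*z'*(1-pc)))
    (hPcadb : Pcadb = x*(1-z)*pc/(x*(1-z)*pc + x'*(1-z')*(1-pc)))
    (hPcbd : Pcbd = (1-x)*z*pc/((1-x)*z*pc + (1-x')*z'*(1-pc)))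
    (hPcbdb : Pcbdb = (1-x)*(1-z)*pc/((1-x)*(1-z)*pc + (1-x')*(1-z')*(1-pc)))
    (hEYad : EYad = y₁*Pcad + y₂*(1-Pcad))
    (hEYadb : EYadb = y₁*Pcadb + y₂*(1-Pcadb))
    (hEYbd : EYbd = y₃*Pcbd + y₄*(1-Pcbd))
    (hEYbdb : EYbdb = y₃*Pcbdb + y₄*(1-Pcbdb))
    (hRDtrue : RDtrue = (y₁-y₃)*pc + (y₂-y₄)*(1-pc))
    (hRDcrude : RDcrude = (y₁*Pca + y₂*(1-Pca)) - (y₃*Pcab + y₄*(1-Pcab)))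
    (hRDobs : RDobs = (EYad - EYbd)*Pd + (EYadb - EYbdb)*(1-Pd))
    :
    (y₁ - y₂ ≥ y₄ - y₃ ∧ y₄ - y₃ ≥ 0 → RDcrude ≥ RDtrue ∧ RDobs ≥ RDtrue) ∧
    (y₁ - y₂ ≤ y₄ - y₃ ∧ y₄ - y₃ ≤ 0 → RDcrude ≤ RDtrue ∧ RDobs ≤ RDtrue) := by
  have hs : x' ≤ 1 - x := by linarith
  have ht : z' ≤ 1 - z := by linarith
  have hxh : (1:ℝ)/2 ≤ x := hxge
  have hzh : (1:ℝ)/2 ≤ z := hzge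
  have h1 : (0:ℝ) < x + x' := by linarith
  have h2 : (0:ℝ) < 2 - x - x' := by linarith
  have hd1 : (0:ℝ) < x*z + x'*z' := by positivity
  have hd2 : (0:ℝ) < (1-x)*z + (1-x')*z' := by nlinarith
  have hd3 : (0:ℝ) < x*(1-z) + x'*(1-z') := by nlinarith
  have hd4 : (0:ℝ) < (1-x)*(1-z) + (1-x')*(1-z') := by nlinarith
  -- simplify the conditional probabilities using pc = 1/2
  have hPca' : Pca = x/(x+x') := by
    rw [hPca, hpch, div_eq_div_iff (by linarith) h1.ne']; ring
  have hPcab' : Pcab = (1-x)/(2-x-x') := by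
    rw [hPcab, hpch, div_eq_div_iff (by linarith) h2.ne']; ring
  have hPcad' : Pcad = x*z/(x*z+x'*z') := by
    rw [hPcad, hpch, div_eq_div_iff (by nlinarith) hd1.ne']; ring
  have hPcadb' : Pcadb = x*(1-z)/(x*(1-z)+x'*(1-z')) := by
    rw [hPcadb, hpch, div_eq_div_iff (by nlinarith) hd3.ne']; ring
  have hPcbd' : Pcbd = (1-x)*z/((1-x)*z+(1-x')*z') := by
    rw [hPcbd, hpch, div_eq_div_iff (by nlinarith) hd2.ne']; ring
  have hPcbdb' : Pcbdb = (1-x)*(1-z)/((1-x)*(1-z)+(1-x')*(1-z')) := by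
    rw [hPcbdb, hpch, div_eq_div_iff (by nlinarith) hd4.ne']; ring
  -- express the differences via the key lemmas' left-hand sides (as atom-level identities)
  have hcrude : ∀ a b : ℝ, a = y₁ - y₂ → b = y₄ - y₃ →
      RDcrude - RDtrue = a*(x/(x+x') - 1/2) + b*((1-x)/(2-x-x') - 1/2) := by
    intro a b ha hb
    rw [hRDcrude, hRDtrue, hPca', hPcab', hpch, ha, hb]; ring
  have hobs : ∀ a b : ℝ, a = y₁ - y₂ → b = y₄ - y₃ →
      RDobs - RDtrue =
      (1/2)*((z+z')*(a*(x*z/(x*z+x'*z') - 1/2) + b*((1-x)*z/((1-x)*z+(1-x')*z') - 1/2))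
       + (2-z-z')*(a*(x*(1-z)/(x*(1-z)+x'*(1-z')) - 1/2)
         + b*((1-x)*(1-z)/((1-x)*(1-z)+(1-x')*(1-z')) - 1/2))) := by
    intro a b ha hb
    rw [hRDobs, hRDtrue, hEYad, hEYadb, hEYbd, hEYbdb, hPd,
      hPcad', hPcadb', hPcbd', hPcbdb', hpch, ha, hb]
    ring
  constructor
  · rintro ⟨hab, hb⟩
    have hc := crude_ge x x' (y₁ - y₂) (y₄ - y₃) hx0 hx1 hx'0 hx'1 hs hxh hab hb
    have ho := obs_ge x x' z z' (y₁ - y₂) (y₄ - y₃) hx0 hx1 hx'0 hx'1 hz0 hz1 hz'0 hz'1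
      hs hxh ht hzh hab hb
    constructor
    · linarith [hcrude _ _ rfl rfl, hc]
    · linarith [hobs _ _ rfl rfl, ho]
  · rintro ⟨hab, hb⟩
    have hab' : -(y₄ - y₃) ≤ -(y₁ - y₂) := by linarith
    have hb' : (0:ℝ) ≤ -(y₄ - y₃) := by linarith
    have hc := crude_ge x x' (-(y₁ - y₂)) (-(y₄ - y₃)) hx0 hx1 hx'0 hx'1 hs hxh hab' hb'
    have ho := obs_ge x x' z z' (-(y₁ - y₂)) (-(y₄ - y₃)) hx0 hx1 hx'0 hx'1 hz0 hz1 hz'0 hz'1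
      hs hxh ht hzh hab' hb'
    have hc2 : RDtrue - RDcrude = (-(y₁ - y₂))*(x/(x+x') - 1/2)
        + (-(y₄ - y₃))*((1-x)/(2-x-x') - 1/2) := by
      have := hcrude (y₁ - y₂) (y₄ - y₃) rfl rfl
      linarith [this]
    have ho2 : RDtrue - RDobs =
        (1/2)*((z+z')*((-(y₁ - y₂))*(x*z/(x*z+x'*z') - 1/2)
            + (-(y₄ - y₃))*((1-x)*z/((1-x)*z+(1-x')*z') - 1/2))
         + (2-z-z')*((-(y₁ - y₂))*(x*(1-z)/(x*(1-z)+x'*(1-z')) - 1/2)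
           + (-(y₄ - y₃))*((1-x)*(1-z)/((1-x)*(1-z)+(1-x')*(1-z')) - 1/2))) := by
      have := hobs (y₁ - y₂) (y₄ - y₃) rfl rfl
      linarith [this]
    constructor <;> [linarith [hc, hc2]; linarith [ho, ho2]]
end

section
/- Suppose π ≤ 1/2 and 1−x′ ≥ x ≥ 1/2 (i.e. P(A=ā|C=c̄) ≥ P(A=a|C=c) ≥ 1/2). If y₁ − y₂ ≥ y₄ − y₃ ≥ 0, then RD_crude ≥ RD_true; and if y₁ − y₂ ≤ y₄ − y₃ ≤ 0, then RD_crude ≤ RD_true. (Paper's Theorem 11.) -/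
theorem thm11 (pc x x' : ℝ) (y₁ y₂ y₃ y₄ : ℝ)
    (hpc : 0 < pc) (hpc1 : pc < 1)
    (hx0 : 0 < x) (hx1 : x < 1) (hx'0 : 0 < x') (hx'1 : x' < 1)
    (hpcle : pc ≤ 1/2) (hxx' : 1 - x' ≥ x) (hxge : x ≥ 1/2)
    (Pca Pcab RDtrue RDcrude : ℝ)
    (hPca : Pca = x*pc/(x*pc + x'*(1-pc)))
    (hPcab : Pcab = (1-x)*pc/((1-x)*pc + (1-x')*(1-pc)))
    (hRDtrue : RDtrue = (y₁-y₃)*pc + (y₂-y₄)*(1-pc))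
    (hRDcrude : RDcrude = (y₁*Pca + y₂*(1-Pca)) - (y₃*Pcab + y₄*(1-Pcab))) :
    (y₁ - y₂ ≥ y₄ - y₃ ∧ y₄ - y₃ ≥ 0 → RDcrude ≥ RDtrue) ∧
    (y₁ - y₂ ≤ y₄ - y₃ ∧ y₄ - y₃ ≤ 0 → RDcrude ≤ RDtrue) := by
  have hd1 : 0 < x*pc + x'*(1-pc) := by nlinarith
  have hd2 : 0 < (1-x)*pc + (1-x')*(1-pc) := by nlinarith
  -- d₁ ≤ d₂
  have hdle : x*pc + x'*(1-pc) ≤ (1-x)*pc + (1-x')*(1-pc) := by nlinarith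
  have ha : 0 ≤ pc*(1-pc)*(x-x') := by nlinarith
  set a := pc*(1-pc)*(x-x') with hadef
  set d₁ := x*pc + x'*(1-pc) with hd1def
  set d₂ := (1-x)*pc + (1-x')*(1-pc) with hd2def
  have key : RDcrude - RDtrue = (y₁-y₂)*(a/d₁) - (y₄-y₃)*(a/d₂) := by
    subst hPca hPcab hRDtrue hRDcrude
    field_simp
    ring
  have hK : a/d₂ ≤ a/d₁ := by
    apply div_le_div_of_nonneg_left ha hd1 hdle
  have hK2 : 0 ≤ a/d₂ := div_nonneg ha hd2.le
  have hK1 : 0 ≤ a/d₁ := div_nonneg ha hd1.le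
  constructor
  · rintro ⟨h1, h2⟩
    nlinarith [mul_le_mul_of_nonneg_right h1 hK1, mul_le_mul_of_nonneg_left hK h2]
  · rintro ⟨h1, h2⟩
    nlinarith [mul_le_mul_of_nonneg_right h1 hK1, mul_le_mul_of_nonpos_left hK h2]
end

section
/- Suppose π ≥ 1/2 and x ≤ 1−x′ ≤ 1/2 (i.e. P(A=a|C=c) ≤ P(A=ā|C=c̄) ≤ 1/2). If y₁ − y₂ ≥ y₄ − y₃ ≥ 0, then RD_crude ≤ RD_true; and if y₁ − y₂ ≤ y₄ − y₃ ≤ 0, then RD_crude ≥ RD_true. (Paper's Theorem 12.) -/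
theorem thm12 (pc x x' : ℝ) (y₁ y₂ y₃ y₄ : ℝ)
    (hpc : 0 < pc) (hpc1 : pc < 1)
    (hx0 : 0 < x) (hx1 : x < 1) (hx'0 : 0 < x') (hx'1 : x' < 1)
    (hpcge : pc ≥ 1/2) (hxx' : x ≤ 1 - x') (hx'le : 1 - x' ≤ 1/2)
    (Pca Pcab RDtrue RDcrude : ℝ)
    (hPca : Pca = x*pc/(x*pc + x'*(1-pc)))
    (hPcab : Pcab = (1-x)*pc/((1-x)*pc + (1-x')*(1-pc)))
    (hRDtrue : RDtrue = (y₁-y₃)*pc + (y₂-y₄)*(1-pc))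
    (hRDcrude : RDcrude = (y₁*Pca + y₂*(1-Pca)) - (y₃*Pcab + y₄*(1-Pcab))) :
    (y₁ - y₂ ≥ y₄ - y₃ ∧ y₄ - y₃ ≥ 0 → RDcrude ≤ RDtrue) ∧
    (y₁ - y₂ ≤ y₄ - y₃ ∧ y₄ - y₃ ≤ 0 → RDcrude ≥ RDtrue) := by
  have hxle : x ≤ x' := by linarith
  have hD1 : 0 < x*pc + x'*(1-pc) := by nlinarith
  have hD2 : 0 < (1-x)*pc + (1-x')*(1-pc) := by nlinarith
  have hA : Pca ≤ pc := by
    rw [hPca, div_le_iff₀ hD1]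
    nlinarith [mul_nonneg (mul_nonneg hpc.le (sub_nonneg.2 hxle)) (by linarith : (0:ℝ) ≤ 1-pc)]
  have hB : pc ≤ Pcab := by
    rw [hPcab, le_div_iff₀ hD2]
    nlinarith [mul_nonneg (mul_nonneg hpc.le (sub_nonneg.2 hxle)) (by linarith : (0:ℝ) ≤ 1-pc)]
  have hDD : x*pc + x'*(1-pc) ≤ (1-x)*pc + (1-x')*(1-pc) := by nlinarith
  have hC : Pca + Pcab ≤ 2*pc := by
    rw [hPca, hPcab, div_add_div _ _ (ne_of_gt hD1) (ne_of_gt hD2),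
      div_le_iff₀ (mul_pos hD1 hD2)]
    nlinarith [mul_nonneg (mul_nonneg (mul_nonneg (sub_nonneg.2 hxle)
      (sub_nonneg.2 hDD)) hpc.le) (by linarith : (0:ℝ) ≤ 1 - pc)]
  have hdiff : RDcrude - RDtrue = (y₁-y₂)*(Pca-pc) + (y₄-y₃)*(Pcab-pc) := by
    rw [hRDcrude, hRDtrue]; ring
  constructor
  · rintro ⟨h1, h2⟩
    nlinarith [mul_nonneg (by linarith : (0:ℝ) ≤ y₁ - y₂ - (y₄ - y₃))
        (by linarith : (0:ℝ) ≤ pc - Pca),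
      mul_nonneg h2 (by linarith : (0:ℝ) ≤ 2*pc - Pca - Pcab)]
  · rintro ⟨h1, h2⟩
    nlinarith [mul_nonneg (by linarith : (0:ℝ) ≤ y₄ - y₃ - (y₁ - y₂))
        (by linarith : (0:ℝ) ≤ pc - Pca),
      mul_nonneg (by linarith : (0:ℝ) ≤ -(y₄ - y₃))
        (by linarith : (0:ℝ) ≤ 2*pc - Pca - Pcab)]
end

section
/- Let α, β, γ, δ be real numbers with β² ≤ 1, δ² ≤ 1 and β²δ² < 1. Set βYA·C = α, βYA = α + βγ, and βYA·D = α + γβ(1−δ²)/(1−β²δ²). If βγ ≥ 0 (i.e. β and γ have the same sign) then βYA·C ≤ βYA·D ≤ βYA; and if βγ ≤ 0 then βYA·C ≥ βYA·D ≥ βYA. (Paper's Theorem 13 on path diagrams.) -/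
theorem thm13_path_diagram (α β γ δ : ℝ)
    (hβ : β^2 ≤ 1) (hδ : δ^2 ≤ 1) (hβδ : β^2*δ^2 < 1)
    (βYAC βYA βYAD : ℝ)
    (h1 : βYAC = α) (h2 : βYA = α + β*γ)
    (h3 : βYAD = α + γ*β*(1-δ^2)/(1-β^2*δ^2)) :
    (β*γ ≥ 0 → βYAC ≤ βYAD ∧ βYAD ≤ βYA) ∧
    (β*γ ≤ 0 → βYAC ≥ βYAD ∧ βYAD ≥ βYA) := by
  have hd : 0 < 1 - β^2*δ^2 := by linarith
  have ht0 : 0 ≤ (1-δ^2)/(1-β^2*δ^2) := div_nonneg (by linarith) hd.le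
  have ht1 : (1-δ^2)/(1-β^2*δ^2) ≤ 1 := by
    rw [div_le_one hd]
    nlinarith
  have key : βYAD = α + (β*γ)*((1-δ^2)/(1-β^2*δ^2)) := by
    rw [h3]; ring
  subst h1 h2
  refine ⟨fun h => ⟨?_, ?_⟩, fun h => ⟨?_, ?_⟩⟩ <;> rw [key]
  · nlinarith [mul_nonneg h ht0]
  · nlinarith [mul_le_of_le_one_right h ht1]
  · nlinarith [mul_nonpos_of_nonpos_of_nonneg h ht0]
  · nlinarith [mul_le_mul_of_nonpos_left ht1 h]
end

section
/- Suppose π = 1/2 and x ≥ x′. Then P(c|a,d)·P(d) + P(c|a,d̄)·(1−P(d)) ≥ 1/2. (Intermediate claim, Equation (foo1) in the proof of the paper's Theorem 2.) -/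
theorem foo1_claim (pc x x' z z' : ℝ)
    (hpc : 0 < pc) (hpc1 : pc < 1)
    (hx0 : 0 < x) (hx1 : x < 1) (hx'0 : 0 < x') (hx'1 : x' < 1)
    (hz0 : 0 < z) (hz1 : z < 1) (hz'0 : 0 < z') (hz'1 : z' < 1)
    (hpch : pc = 1/2) (hxx' : x ≥ x')
    (Pd Pcad Pcadb : ℝ)
    (hPd : Pd = z*pc + z'*(1-pc))
    (hPcad : Pcad = x*z*pc/(x*z*pc + x'*z'*(1-pc)))
    (hPcadb : Pcadb = x*(1-z)*pc/(x*(1-z)*pc + x'*(1-z')*(1-pc))) :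
    Pcad*Pd + Pcadb*(1-Pd) ≥ 1/2 := by
  subst hpch hPd hPcad hPcadb
  have h1z : (0:ℝ) < 1 - z := by linarith
  have h1z' : (0:ℝ) < 1 - z' := by linarith
  have hD1 : 0 < x*z*(1/2) + x'*z'*(1-1/2) := by positivity
  have hD2 : 0 < x*(1-z)*(1/2) + x'*(1-z')*(1-1/2) := by positivity
  rw [ge_iff_le, div_mul_eq_mul_div, div_mul_eq_mul_div,
    div_add_div _ _ hD1.ne' hD2.ne', le_div_iff₀ (by positivity)]
  nlinarith [mul_nonneg (by linarith : (0:ℝ) ≤ x - x')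
    (le_of_lt (add_pos (mul_pos (mul_pos hx0 hz0) h1z) (mul_pos (mul_pos hx'0 hz'0) h1z')))]
end

section
/- Suppose π = 1/2, 1−x′ ≥ x ≥ 1/2 and 1−z′ ≥ z ≥ 1/2. Then P(c|a,d)·P(d) + P(c|a,d̄)·(1−P(d)) ≥ (1−P(c|ā,d))·P(d) + (1−P(c|ā,d̄))·(1−P(d)). (Key inequality in the proof of the paper's Theorem 9, verified there using Mathematica's FindInstance.) -/
set_option maxHeartbeats 2000000 in
theorem key_inequality_thm9 (pc x x' z z' : ℝ)
    (hpc : 0 < pc) (hpc1 : pc < 1)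
    (hx0 : 0 < x) (hx1 : x < 1) (hx'0 : 0 < x') (hx'1 : x' < 1)
    (hz0 : 0 < z) (hz1 : z < 1) (hz'0 : 0 < z') (hz'1 : z' < 1)
    (hpch : pc = 1/2)
    (hxx' : 1 - x' ≥ x) (hxge : x ≥ 1/2)
    (hzz' : 1 - z' ≥ z) (hzge : z ≥ 1/2)
    (Pd Pcad Pcadb Pcbd Pcbdb : ℝ)
    (hPd : Pd = z*pc + z'*(1-pc))
    (hPcad : Pcad = x*z*pc/(x*z*pc + x'*z'*(1-pc)))
    (hPcadb : Pcadb = x*(1-z)*pc/(x*(1-z)*pc + x'*(1-z')*(1-pc)))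
    (hPcbd : Pcbd = (1-x)*z*pc/((1-x)*z*pc + (1-x')*z'*(1-pc)))
    (hPcbdb : Pcbdb = (1-x)*(1-z)*pc/((1-x)*(1-z)*pc + (1-x')*(1-z')*(1-pc))) :
    Pcad*Pd + Pcadb*(1-Pd) ≥ (1-Pcbd)*Pd + (1-Pcbdb)*(1-Pd) := by
  subst hpch hPd hPcad hPcadb hPcbd hPcbdb
  have h1x : (0:ℝ) ≤ 1 - x := by linarith
  have h1x' : (0:ℝ) ≤ 1 - x' := by linarith
  have h1z : (0:ℝ) ≤ 1 - z := by linarith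
  have h1z' : (0:ℝ) ≤ 1 - z' := by linarith
  have h1xp : (0:ℝ) < 1 - x := by linarith
  have h1x'p : (0:ℝ) < 1 - x' := by linarith
  have h1zp : (0:ℝ) < 1 - z := by linarith
  have h1z'p : (0:ℝ) < 1 - z' := by linarith
  have hd1 : (0:ℝ) < x*z*(1/2) + x'*z'*(1-1/2) := by
    nlinarith [mul_pos hx0 hz0, mul_pos hx'0 hz'0]
  have hd2 : (0:ℝ) < x*(1-z)*(1/2) + x'*(1-z')*(1-1/2) := by
    nlinarith [mul_pos hx0 h1zp, mul_pos hx'0 h1z'p]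
  have hd3 : (0:ℝ) < (1-x)*z*(1/2) + (1-x')*z'*(1-1/2) := by
    nlinarith [mul_pos h1xp hz0, mul_pos h1x'p hz'0]
  have hd4 : (0:ℝ) < (1-x)*(1-z)*(1/2) + (1-x')*(1-z')*(1-1/2) := by
    nlinarith [mul_pos h1xp h1zp, mul_pos h1x'p h1z'p]
  rw [ge_iff_le, ← sub_nonneg]
  have key : x*z*(1/2)/(x*z*(1/2) + x'*z'*(1-1/2)) * (z*(1/2) + z'*(1-1/2))
      + x*(1-z)*(1/2)/(x*(1-z)*(1/2) + x'*(1-z')*(1-1/2)) * (1 - (z*(1/2) + z'*(1-1/2)))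
      - ((1 - (1-x)*z*(1/2)/((1-x)*z*(1/2) + (1-x')*z'*(1-1/2))) * (z*(1/2) + z'*(1-1/2))
      + (1 - (1-x)*(1-z)*(1/2)/((1-x)*(1-z)*(1/2) + (1-x')*(1-z')*(1-1/2))) * (1 - (z*(1/2) + z'*(1-1/2))))
      = (2*(z+z')*(2-z-z')*(x*(1-x)-x'*(1-x'))*(x*(1-x)*(z*(1-z))+x'*(1-x')*(z'*(1-z')))
        + (x-x')^2*((x*(1-x)-x'*(1-x'))*(2*z*(1-z))*(1-2*z+2*z^2-(1-z-z')^2)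
            + 2*(x'*(1-x'))*(1-z-z')*(z-z')^3))
        / (4*((x*z+x'*z')*(x*(1-z)+x'*(1-z'))*((1-x)*z+(1-x')*z')*((1-x)*(1-z)+(1-x')*(1-z')))) := by
    have e1 := hd1.ne'
    have e2 := hd2.ne'
    have e3 := hd3.ne'
    have e4 := hd4.ne'
    field_simp
    ring
  rw [key]
  have huv : (0:ℝ) ≤ x*(1-x) - x'*(1-x') := by
    nlinarith [mul_nonneg (show (0:ℝ) ≤ x - x' by linarith) (show (0:ℝ) ≤ 1 - x - x' by linarith)]
  have hW : (0:ℝ) ≤ 1-2*z+2*z^2-(1-z-z')^2 := by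
    nlinarith [mul_nonneg hz'0.le (show (0:ℝ) ≤ 2-2*z-z' by linarith), sq_nonneg z]
  have hKL : (0:ℝ) ≤ x*(1-x)*(z*(1-z))+x'*(1-x')*(z'*(1-z')) :=
    add_nonneg (mul_nonneg (mul_nonneg hx0.le h1x) (mul_nonneg hz0.le h1z))
      (mul_nonneg (mul_nonneg hx'0.le h1x') (mul_nonneg hz'0.le h1z'))
  have hN : (0:ℝ) ≤ 2*(z+z')*(2-z-z')*(x*(1-x)-x'*(1-x'))*(x*(1-x)*(z*(1-z))+x'*(1-x')*(z'*(1-z')))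
      + (x-x')^2*((x*(1-x)-x'*(1-x'))*(2*z*(1-z))*(1-2*z+2*z^2-(1-z-z')^2)
          + 2*(x'*(1-x'))*(1-z-z')*(z-z')^3) := by
    have A : (0:ℝ) ≤ 2*(z+z')*(2-z-z')*(x*(1-x)-x'*(1-x'))*(x*(1-x)*(z*(1-z))+x'*(1-x')*(z'*(1-z'))) := by
      apply mul_nonneg _ hKL
      apply mul_nonneg _ huv
      apply mul_nonneg _ (by linarith : (0:ℝ) ≤ 2-z-z')
      nlinarith
    have B : (0:ℝ) ≤ (x-x')^2*((x*(1-x)-x'*(1-x'))*(2*z*(1-z))*(1-2*z+2*z^2-(1-z-z')^2)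
        + 2*(x'*(1-x'))*(1-z-z')*(z-z')^3) := by
      apply mul_nonneg (sq_nonneg _)
      apply add_nonneg
      · exact mul_nonneg (mul_nonneg huv (by nlinarith : (0:ℝ) ≤ 2*z*(1-z))) hW
      · apply mul_nonneg (mul_nonneg _ (by linarith : (0:ℝ) ≤ 1-z-z'))
        · exact pow_nonneg (by linarith : (0:ℝ) ≤ z-z') 3
        · exact mul_nonneg (by norm_num) (mul_nonneg hx'0.le h1x')
    linarith
  have hD : (0:ℝ) < 4*((x*z+x'*z')*(x*(1-z)+x'*(1-z'))*((1-x)*z+(1-x')*z')*((1-x)*(1-z)+(1-x')*(1-z'))) := by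
    have p1 : (0:ℝ) < x*z+x'*z' := by nlinarith [mul_pos hx0 hz0, mul_pos hx'0 hz'0]
    have p2 : (0:ℝ) < x*(1-z)+x'*(1-z') := by nlinarith [mul_pos hx0 h1zp, mul_pos hx'0 h1z'p]
    have p3 : (0:ℝ) < (1-x)*z+(1-x')*z' := by nlinarith [mul_pos h1xp hz0, mul_pos h1x'p hz'0]
    have p4 : (0:ℝ) < (1-x)*(1-z)+(1-x')*(1-z') := by nlinarith [mul_pos h1xp h1zp, mul_pos h1x'p h1z'p]
    positivity
  exact div_nonneg hN hD.le
end
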